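/- arXiv:2508.19345 — 6 statements merged into one kernel-verified Lean document; each statement's English description precedes it below -/
import Mathlib

section
/- Consider N battery units with time-varying states x_i : [0,∞) → ℝ running the dynamic average consensus estimator dx̂_{a,i}/dt = dx_i/dt − β Σ_{j=1}^N a_ij (x̂_{a,i}(t) − x̂_{a,j}(t)) with initialization x̂_{a,i}(0) = x_i(0). There exists a constant γ_s > 0, namely γ_s = sup_{τ≥0} ‖(I_N − (1/N) 1_N 1_N^T) ẋ(τ)‖ (assumed finite), such that for every β > 0 and every i, limsup_{t→∞} |x̂_{a,i}(t) − x_a(t)| ≤ γ_s/(β λ_2), where x_a(t) = (1/N) Σ_{j=1}^N x_j(t). -/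
open Filter Matrix
open scoped Topology

/-- Euclidean norm of a finitely-indexed real vector. -/
noncomputable def eucNorm {ι : Type*} [Fintype ι] (v : ι → ℝ) : ℝ :=
  Real.sqrt (∑ i, v i ^ 2)

lemma freq_slope {f : ℝ → ℝ} {f' : ℝ} {x : ℝ} (hf : HasDerivWithinAt f f' (Set.Ici x) x) :
    ∀ r, f' < r → ∃ᶠ z in nhdsWithin x (Set.Ioi x), (z - x)⁻¹ * (f z - f x) < r := by
  intro r hr
  rw [hasDerivWithinAt_iff_tendsto_slope, Set.Ici_sdiff_left] at hf
  have h := (hf.eventually (gt_mem_nhds hr)).frequently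
  refine h.mono fun z hz => ?_
  rwa [slope_def_field, div_eq_inv_mul] at hz

lemma decay_bound {V V' : ℝ → ℝ} {k M : ℝ} (hk : 0 < k) (hM : 0 ≤ M)
    (hVd : ∀ t, 0 ≤ t → HasDerivAt V (V' t) t)
    (hbound : ∀ t, 0 ≤ t → V' t ≤ -k * V t + M) :
    ∀ t, 0 ≤ t → V t ≤ V 0 * Real.exp (-k * t) + M / k := by
  intro t ht
  have h := le_gronwallBound_of_liminf_deriv_right_le (f := V) (f' := V') (a := 0) (b := t)
    (δ := V 0) (K := -k) (ε := M)
    (fun s hs => ((hVd s hs.1).continuousAt).continuousWithinAt)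
    (fun s hs r hr => freq_slope ((hVd s hs.1).hasDerivWithinAt) r hr)
    le_rfl (fun s hs => hbound s hs.1) t (Set.right_mem_Icc.2 ht)
  rw [gronwallBound_of_K_ne_0 (neg_ne_zero.2 hk.ne')] at h
  simp only [sub_zero] at h
  have h1 : Real.exp (-k * t) ≤ 1 := Real.exp_le_one_iff.2 (by nlinarith)
  have h2 : 0 < Real.exp (-k * t) := Real.exp_pos _
  have h3 : M / (-k) * (Real.exp (-k * t) - 1) ≤ M / k := by
    have he : M / (-k) * (Real.exp (-k * t) - 1) = M / k * (1 - Real.exp (-k * t)) := by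
      rw [div_neg]; ring
    have hMk : 0 ≤ M / k := div_nonneg hM hk.le
    nlinarith
  linarith

/-- convergence of the dynamic average consensus estimator
`dx̂ₐᵢ/dt = ẋᵢ − β Σⱼ aᵢⱼ (x̂ₐᵢ − x̂ₐⱼ)`, `x̂ₐᵢ(0) = xᵢ(0)`, to a neighborhood of the
average unit state `xₐ(t) = (1/N) Σⱼ xⱼ(t)` of radius `γₛ/(β lam2)`, where
`γₛ = sup_{τ ≥ 0} ‖(I − (1/N)𝟙𝟙ᵀ) ẋ(τ)‖` (assumed finite) and `lam2` is the second
smallest eigenvalue of the Laplacian of the undirected connected communication graph. -/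
theorem statement0
    (N : ℕ) (G : SimpleGraph (Fin N)) [DecidableRel G.Adj] (hG : G.Connected)
    (x xhat : ℝ → Fin N → ℝ)
    (hx : ∀ i, ContDiff ℝ 1 (fun t => x t i))
    (γs lam2 β : ℝ)
    -- γₛ is the supremum over τ ≥ 0 of ‖(I_N − (1/N) 1_N 1_Nᵀ) ẋ(τ)‖, assumed finite
    (hγ : IsLUB ((fun τ : ℝ => eucNorm (fun i =>
        deriv (fun s => x s i) τ - (∑ j, deriv (fun s => x s j) τ) / (N : ℝ))) ''
        Set.Ici (0 : ℝ)) γs)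
    (hγpos : 0 < γs)
    -- lam2 is the second smallest eigenvalue of the Laplacian: it is a positive
    -- eigenvalue attained on the orthogonal complement of 1_N, and is the optimal
    -- Rayleigh-quotient bound there
    (hlampos : 0 < lam2)
    (hlameig : ∃ v : Fin N → ℝ, v ≠ 0 ∧ (∑ i, v i) = 0 ∧
        (G.lapMatrix ℝ).mulVec v = lam2 • v)
    (hlammin : ∀ δ : Fin N → ℝ, (∑ i, δ i) = 0 →
        lam2 * (∑ i, δ i ^ 2) ≤ δ ⬝ᵥ (G.lapMatrix ℝ).mulVec δ)
    (hβ : 0 < β)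
    -- the dynamic average consensus estimator dynamics
    (hdyn : ∀ i, ∀ t : ℝ, 0 ≤ t → HasDerivAt (fun s => xhat s i)
        (deriv (fun s => x s i) t
          - β * ∑ j, (G.adjMatrix ℝ) i j * (xhat t i - xhat t j)) t)
    (hinit : ∀ i, xhat 0 i = x 0 i) :
    -- limsup_{t→∞} |x̂ₐᵢ(t) − xₐ(t)| ≤ γₛ/(β lam2)
    ∀ i, ∀ ε > 0, ∀ᶠ t in atTop,
      |xhat t i - (∑ j, x t j) / (N : ℝ)| ≤ γs / (β * lam2) + ε := by
  intro i ε hε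
  have hN : 0 < N := by
    have := hG.nonempty
    rcases this with ⟨v⟩
    exact v.pos
  have hNR : (0 : ℝ) < N := by exact_mod_cast hN
  set k : ℝ := β * lam2 with hkdef
  have hkpos : 0 < k := mul_pos hβ hlampos
  -- derivatives of x
  have hxd : ∀ j (t : ℝ), HasDerivAt (fun s => x s j) (deriv (fun s => x s j) t) t :=
    fun j t => ((hx j).differentiable one_ne_zero t).hasDerivAt
  have hSd : ∀ t : ℝ, HasDerivAt (fun s => ∑ j, x s j) (∑ j, deriv (fun s => x s j) t) t :=
    fun t => HasDerivAt.fun_sum (fun j _ => hxd j t)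
  -- auxiliary notations
  set g : ℝ → Fin N → ℝ :=
    fun t j => deriv (fun s => x s j) t - (∑ l, deriv (fun s => x s l) t) / (N : ℝ) with hgdef
  set w : ℝ → Fin N → ℝ :=
    fun t j => ∑ l, (G.adjMatrix ℝ) j l * (xhat t j - xhat t l) with hwdef
  set e : ℝ → Fin N → ℝ := fun t j => xhat t j - (∑ l, x t l) / (N : ℝ) with hedef
  set V : ℝ → ℝ := fun t => ∑ j, (e t j) ^ 2 with hVdef
  set V' : ℝ → ℝ := fun t => ∑ j, 2 * e t j * (g t j - β * w t j) with hV'def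
  have hVnn : ∀ t, 0 ≤ V t := fun t => Finset.sum_nonneg fun j _ => sq_nonneg _
  -- antisymmetry: total adjacency flow is zero
  have hA : ∀ j l, (G.adjMatrix ℝ) j l = (G.adjMatrix ℝ) l j := by
    intro j l; simp [SimpleGraph.adjMatrix_apply, G.adj_comm]
  have hwsum : ∀ t, ∑ j, w t j = 0 := by
    intro t
    have key : (∑ j, w t j) = -(∑ j, w t j) := by
      simp only [hwdef]
      conv_lhs => rw [Finset.sum_comm]
      rw [← Finset.sum_neg_distrib]
      refine Finset.sum_congr rfl fun j _ => ?_
      rw [← Finset.sum_neg_distrib]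
      refine Finset.sum_congr rfl fun l _ => ?_
      rw [hA l j]; ring
    linarith
  -- conservation of totals
  have hcons : ∀ t : ℝ, 0 ≤ t → ∑ j, xhat t j = ∑ j, x t j := by
    intro t ht
    set h : ℝ → ℝ := fun s => (∑ j, xhat s j) - ∑ j, x s j with hhdef
    have hder : ∀ s : ℝ, 0 ≤ s → HasDerivAt h 0 s := by
      intro s hs
      have h1 : HasDerivAt (fun u => ∑ j, xhat u j)
          (∑ j, (deriv (fun u => x u j) s - β * w s j)) s :=
        HasDerivAt.fun_sum fun j _ => by simpa [hwdef] using hdyn j s hs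
      have h2 := h1.fun_sub (hSd s)
      refine h2.congr_deriv ?_
      rw [Finset.sum_sub_distrib]
      have h3 : ∑ j, β * w s j = β * ∑ j, w s j := by rw [Finset.mul_sum]
      rw [h3, hwsum s]
      ring
    have heq := constant_of_has_deriv_right_zero (a := 0) (b := t)
      (fun s hs => ((hder s hs.1).continuousAt).continuousWithinAt)
      (fun s hs => (hder s hs.1).hasDerivWithinAt) t (Set.right_mem_Icc.2 ht)
    have h0 : h 0 = 0 := by simp [hhdef, hinit]
    have ht' : h t = 0 := heq.trans h0
    simpa [hhdef, sub_eq_zero] using ht'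
  -- sum of errors is zero
  have hesum : ∀ t : ℝ, 0 ≤ t → ∑ j, e t j = 0 := by
    intro t ht
    simp only [hedef, Finset.sum_sub_distrib, Finset.sum_const, Finset.card_univ,
      Fintype.card_fin, nsmul_eq_mul, hcons t ht]
    field_simp
    ring
  -- derivative of e and V
  have hed : ∀ j (t : ℝ), 0 ≤ t →
      HasDerivAt (fun s => e s j) (g t j - β * w t j) t := by
    intro j t ht
    have h := (hdyn j t ht).fun_sub ((hSd t).div_const (N : ℝ))
    refine h.congr_deriv ?_
    simp only [hgdef, hwdef]; ring
  have hVd : ∀ t : ℝ, 0 ≤ t → HasDerivAt V (V' t) t := by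
    intro t ht
    exact HasDerivAt.fun_sum fun j _ => by
      simpa [mul_assoc, mul_comm, mul_left_comm] using ((hed j t ht).fun_pow 2)
  -- the key differential inequality
  have hbound : ∀ t : ℝ, 0 ≤ t → V' t ≤ -k * V t + γs ^ 2 / k := by
    intro t ht
    have hgnorm : eucNorm (g t) ≤ γs := hγ.1 ⟨t, ht, rfl⟩
    have hCS : (∑ j, e t j * g t j) ≤ Real.sqrt (V t) * γs := by
      have h1 : (∑ j, e t j * g t j) ^ 2 ≤ (∑ j, e t j ^ 2) * ∑ j, g t j ^ 2 :=
        Finset.sum_mul_sq_le_sq_mul_sq _ _ _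
      have h3 : |∑ j, e t j * g t j| = Real.sqrt ((∑ j, e t j * g t j) ^ 2) :=
        (Real.sqrt_sq_eq_abs _).symm
      have h4 : Real.sqrt ((∑ j, e t j * g t j) ^ 2) ≤
          Real.sqrt ((∑ j, e t j ^ 2) * ∑ j, g t j ^ 2) := Real.sqrt_le_sqrt h1
      have h5 : Real.sqrt ((∑ j, e t j ^ 2) * ∑ j, g t j ^ 2) =
          Real.sqrt (V t) * eucNorm (g t) := by
        rw [Real.sqrt_mul (hVnn t)]; rfl
      have h6 : Real.sqrt (V t) * eucNorm (g t) ≤ Real.sqrt (V t) * γs :=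
        mul_le_mul_of_nonneg_left hgnorm (Real.sqrt_nonneg _)
      have h2 : (∑ j, e t j * g t j) ≤ |∑ j, e t j * g t j| := le_abs_self _
      linarith
    have hwL : ∀ j, w t j = (G.lapMatrix ℝ *ᵥ xhat t) j := by
      intro j
      rw [SimpleGraph.lapMatrix_mulVec_apply]
      simp only [hwdef, mul_sub, Finset.sum_sub_distrib]
      congr 1
      · rw [← Finset.sum_mul, G.degree_eq_sum_if_adj (R := ℝ) j]
        simp [SimpleGraph.adjMatrix_apply]
      · rw [← SimpleGraph.adjMatrix_mulVec_apply]
        simp [Matrix.mulVec, dotProduct]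
    have hLe : G.lapMatrix ℝ *ᵥ xhat t = G.lapMatrix ℝ *ᵥ e t := by
      have hsplit : xhat t = (fun j => e t j) + ((∑ l, x t l) / (N : ℝ)) • (fun _ => (1 : ℝ)) := by
        funext j; simp [hedef]
      rw [hsplit, Matrix.mulVec_add, Matrix.mulVec_smul, G.lapMatrix_mulVec_const_eq_zero]
      simp
    have hRay : lam2 * V t ≤ ∑ j, e t j * w t j := by
      have hmin := hlammin (e t) (hesum t ht)
      calc lam2 * V t ≤ e t ⬝ᵥ (G.lapMatrix ℝ *ᵥ e t) := hmin
        _ = ∑ j, e t j * w t j := by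
            rw [← hLe]
            simp only [dotProduct]
            exact Finset.sum_congr rfl fun j _ => by rw [hwL j]
    have expand : V' t = 2 * (∑ j, e t j * g t j) - 2 * β * (∑ j, e t j * w t j) := by
      simp only [hV'def]
      rw [Finset.sum_congr rfl (fun j _ => by ring :
        ∀ j ∈ Finset.univ, 2 * e t j * (g t j - β * w t j)
          = 2 * (e t j * g t j) - 2 * β * (e t j * w t j)),
        Finset.sum_sub_distrib, ← Finset.mul_sum, ← Finset.mul_sum]
    have hsq : Real.sqrt (V t) ^ 2 = V t := Real.sq_sqrt (hVnn t)
    have hamgm : 2 * γs * Real.sqrt (V t) ≤ k * V t + γs ^ 2 / k := by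
      have h7 : (2 * γs * Real.sqrt (V t)) * k ≤ (k * V t + γs ^ 2 / k) * k := by
        rw [add_mul, div_mul_cancel₀ _ hkpos.ne']
        have hsq2 : k ^ 2 * Real.sqrt (V t) ^ 2 = k ^ 2 * V t := by rw [hsq]
        nlinarith [sq_nonneg (k * Real.sqrt (V t) - γs), hsq2]
      exact le_of_mul_le_mul_right h7 hkpos
    have h8 : β * (lam2 * V t) ≤ β * (∑ j, e t j * w t j) :=
      mul_le_mul_of_nonneg_left hRay hβ.le
    have h9 : β * (lam2 * V t) = k * V t := by rw [hkdef]; ring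
    nlinarith [hCS, hamgm]
  -- Gronwall
  have hdecay : ∀ t : ℝ, 0 ≤ t → V t ≤ V 0 * Real.exp (-k * t) + (γs ^ 2 / k) / k :=
    decay_bound hkpos (div_nonneg (sq_nonneg _) hkpos.le) hVd hbound
  -- finish
  have htend : Tendsto (fun t : ℝ => V 0 * Real.exp (-k * t)) atTop (𝓝 0) := by
    have h1 : Tendsto (fun t : ℝ => k * t) atTop atTop :=
      Tendsto.const_mul_atTop hkpos tendsto_id
    have h2 : Tendsto (fun t : ℝ => -(k * t)) atTop atBot := tendsto_neg_atTop_atBot.comp h1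
    have h3 : Tendsto (fun t : ℝ => Real.exp (-(k * t))) atTop (𝓝 0) :=
      Real.tendsto_exp_atBot.comp h2
    have h4 := h3.const_mul (V 0)
    simpa [neg_mul] using h4
  have hev1 : ∀ᶠ t in atTop, V 0 * Real.exp (-k * t) < ε ^ 2 :=
    htend.eventually_lt_const (by positivity)
  have hcnn : 0 ≤ γs / k := div_nonneg hγpos.le hkpos.le
  have hcc : γs ^ 2 / k / k = (γs / k) ^ 2 := by
    rw [div_div, div_pow]; ring_nf
  filter_upwards [hev1, eventually_ge_atTop (0 : ℝ)] with t h1 h2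
  have hVb : V t ≤ (γs / k + ε) ^ 2 := by
    have hd := hdecay t h2
    rw [hcc] at hd
    nlinarith [hcnn, hε.le]
  have habs : |e t i| ≤ Real.sqrt (V t) := by
    have hle : e t i ^ 2 ≤ V t :=
      Finset.single_le_sum (f := fun j => e t j ^ 2) (fun j _ => sq_nonneg _) (Finset.mem_univ i)
    calc |e t i| = Real.sqrt (e t i ^ 2) := (Real.sqrt_sq_eq_abs _).symm
      _ ≤ Real.sqrt (V t) := Real.sqrt_le_sqrt hle
  have hfin : Real.sqrt (V t) ≤ γs / k + ε := by
    calc Real.sqrt (V t) ≤ Real.sqrt ((γs / k + ε) ^ 2) := Real.sqrt_le_sqrt hVb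
      _ = γs / k + ε := Real.sqrt_sq (by positivity)
  have hgoal : xhat t i - (∑ j, x t j) / (N : ℝ) = e t i := by simp [hedef]
  rw [hgoal]
  exact habs.trans hfin
end

section
/- Consider the leader-following estimator dp̂_{a,i}/dt = −κ( Σ_{j=1}^N a_ij (p̂_{a,i}(t) − p̂_{a,j}(t)) + b_i (p̂_{a,i}(t) − p_a(t)) ), p̂_{a,i}(0) = 0, where b_i ∈ {0,1} with b_i = 1 for at least one i, and the reference signal p_a : [0,∞) → ℝ is continuously differentiable with |ṗ_a(t)| ≤ ψ/N for all t. Then there exists a constant γ_p > 0, independent of κ, such that for every κ > 0 and every i, limsup_{t→∞} |p̂_{a,i}(t) − p_a(t)| ≤ ψ γ_p / κ. -/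
open Filter Matrix Topology

section Aux

variable {N : ℕ} (A : Matrix (Fin N) (Fin N) ℝ) (b : Fin N → ℝ)

set_option maxHeartbeats 1000000

/-- The quadratic form appearing in the Lyapunov argument. -/
noncomputable def quadB (x : Fin N → ℝ) : ℝ :=
  ∑ i, x i * ((∑ j, A i j * (x i - x j)) + b i * x i)

lemma quadB_split (x : Fin N → ℝ) :
    quadB A b x = (∑ i, ∑ j, A i j * (x i * (x i - x j))) + ∑ i, b i * x i ^ 2 := by
  unfold quadB
  rw [← Finset.sum_add_distrib]
  refine Finset.sum_congr rfl fun i _ => ?_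
  rw [mul_add, Finset.mul_sum]
  congr 1
  · exact Finset.sum_congr rfl fun j _ => by ring
  · ring

lemma two_quadB (hA : ∀ i j, A i j = A j i) (x : Fin N → ℝ) :
    2 * quadB A b x
      = (∑ i, ∑ j, A i j * (x i - x j) ^ 2) + 2 * ∑ i, b i * x i ^ 2 := by
  have hS : (∑ i, ∑ j, A i j * (x i * (x i - x j)))
      = ∑ i, ∑ j, A i j * (x j * (x j - x i)) := by
    rw [Finset.sum_comm]
    exact Finset.sum_congr rfl fun i _ => Finset.sum_congr rfl fun j _ => by rw [hA j i]
  rw [quadB_split]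
  have : (∑ i, ∑ j, A i j * (x i * (x i - x j)))
      + (∑ i, ∑ j, A i j * (x j * (x j - x i)))
      = ∑ i, ∑ j, A i j * (x i - x j) ^ 2 := by
    rw [← Finset.sum_add_distrib]
    refine Finset.sum_congr rfl fun i _ => ?_
    rw [← Finset.sum_add_distrib]
    exact Finset.sum_congr rfl fun j _ => by ring
  nlinarith [hS, this]

lemma quadB_nonneg (hA : ∀ i j, A i j = A j i) (hA0 : ∀ i j, 0 ≤ A i j)
    (hb0 : ∀ i, 0 ≤ b i) (x : Fin N → ℝ) : 0 ≤ quadB A b x := by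
  have h2 := two_quadB A b hA x
  have h1 : 0 ≤ ∑ i, ∑ j, A i j * (x i - x j) ^ 2 :=
    Finset.sum_nonneg fun i _ => Finset.sum_nonneg fun j _ =>
      mul_nonneg (hA0 i j) (sq_nonneg _)
  have h3 : 0 ≤ ∑ i, b i * x i ^ 2 :=
    Finset.sum_nonneg fun i _ => mul_nonneg (hb0 i) (sq_nonneg _)
  linarith

lemma quadB_smul (c : ℝ) (x : Fin N → ℝ) :
    quadB A b (c • x) = c ^ 2 * quadB A b x := by
  unfold quadB
  rw [Finset.mul_sum]
  refine Finset.sum_congr rfl fun i _ => ?_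
  simp only [Pi.smul_apply, smul_eq_mul]
  have h : (∑ j, A i j * (c * x i - c * x j)) = c * ∑ j, A i j * (x i - x j) := by
    rw [Finset.mul_sum]
    exact Finset.sum_congr rfl fun j _ => by ring
  rw [h]; ring

lemma quadB_continuous : Continuous (quadB A b) := by
  unfold quadB
  refine continuous_finset_sum _ fun i _ => (continuous_apply i).mul (Continuous.add ?_ ?_)
  · exact continuous_finset_sum _ fun j _ =>
      continuous_const.mul ((continuous_apply i).sub (continuous_apply j))
  · exact continuous_const.mul (continuous_apply i)

/-- Positive definiteness of the quadratic form gives a uniform lower bound. -/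
lemma exists_lam (hA : ∀ i j, A i j = A j i) (hA0 : ∀ i j, 0 ≤ A i j)
    (hb0 : ∀ i, 0 ≤ b i) (hN : 0 < N)
    (hdef : ∀ x : Fin N → ℝ, quadB A b x = 0 → x = 0) :
    ∃ lam > (0 : ℝ), ∀ x : Fin N → ℝ, lam * (∑ i, x i ^ 2) ≤ quadB A b x := by
  haveI : Nonempty (Fin N) := ⟨⟨0, hN⟩⟩
  have hsphne : (Metric.sphere (0 : Fin N → ℝ) 1).Nonempty := by
    refine ⟨fun _ => 1, ?_⟩
    simp
  obtain ⟨x0, hx0mem, hmin⟩ :=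
    (isCompact_sphere (0 : Fin N → ℝ) 1).exists_isMinOn hsphne
      (quadB_continuous A b).continuousOn
  have hx0norm : ‖x0‖ = 1 := by simpa using hx0mem
  set lam := quadB A b x0 with hlamdef
  have hlampos : 0 < lam := by
    rcases lt_or_eq_of_le (quadB_nonneg A b hA hA0 hb0 x0) with h | h
    · exact h
    · exfalso
      have hx0 : x0 = 0 := hdef x0 h.symm
      rw [hx0] at hx0norm; simp at hx0norm
  have hNR : (0 : ℝ) < N := Nat.cast_pos.2 hN
  refine ⟨lam / N, div_pos hlampos hNR, fun x => ?_⟩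
  by_cases hx : x = 0
  · subst hx
    have : quadB A b (0 : Fin N → ℝ) = 0 := by
      have := quadB_smul A b 0 0
      simpa using this
    simp [this]
  · have hxn : 0 < ‖x‖ := norm_pos_iff.2 hx
    set u : Fin N → ℝ := ‖x‖⁻¹ • x with hu
    have hun : ‖u‖ = 1 := by
      rw [hu, norm_smul, norm_inv, norm_norm, inv_mul_cancel₀ hxn.ne']
    have humem : u ∈ Metric.sphere (0 : Fin N → ℝ) 1 := by simp [hun]
    have h1 : lam ≤ quadB A b u := hmin humem
    have h2 : quadB A b x = ‖x‖ ^ 2 * quadB A b u := by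
      have : x = ‖x‖ • u := by
        rw [hu, smul_smul, mul_inv_cancel₀ hxn.ne', one_smul]
      conv_lhs => rw [this]
      exact quadB_smul A b _ u
    have h3 : ∑ i, x i ^ 2 ≤ N * ‖x‖ ^ 2 := by
      have : ∀ i, x i ^ 2 ≤ ‖x‖ ^ 2 := fun i => by
        have := norm_le_pi_norm x i
        have h0 : |x i| ≤ ‖x‖ := by simpa using this
        nlinarith [abs_nonneg (x i), sq_abs (x i)]
      calc ∑ i, x i ^ 2 ≤ ∑ _i : Fin N, ‖x‖ ^ 2 :=
            Finset.sum_le_sum fun i _ => this i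
        _ = N * ‖x‖ ^ 2 := by simp [Finset.sum_const, mul_comm]
    have h4 : lam * ‖x‖ ^ 2 ≤ quadB A b x := by nlinarith [sq_nonneg ‖x‖]
    have h5 : lam / N * (∑ i, x i ^ 2) ≤ lam / N * (N * ‖x‖ ^ 2) := by
      apply mul_le_mul_of_nonneg_left h3 (le_of_lt (div_pos hlampos hNR))
    have h6 : lam / N * (N * ‖x‖ ^ 2) = lam * ‖x‖ ^ 2 := by
      field_simp
    linarith

end Aux

set_option maxHeartbeats 1600000

/-- convergence of the leader-following average desired power estimator
`dp̂ₐᵢ/dt = −κ(Σⱼ aᵢⱼ (p̂ₐᵢ − p̂ₐⱼ) + bᵢ(p̂ₐᵢ − pₐ))`, `p̂ₐᵢ(0) = 0`: there is a constant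
`γₚ > 0`, independent of `κ`, such that for every `κ > 0` and every `i`,
`limsup_{t→∞} |p̂ₐᵢ(t) − pₐ(t)| ≤ ψ γₚ / κ`. -/
theorem statement1
    (N : ℕ) (G : SimpleGraph (Fin N)) [DecidableRel G.Adj] (hG : G.Connected)
    (b : Fin N → ℝ) (hb : ∀ i, b i = 0 ∨ b i = 1) (hb1 : ∃ i, b i = 1)
    (pa : ℝ → ℝ) (hpa : ContDiff ℝ 1 pa)
    (ψ : ℝ) (hψ : 0 < ψ)
    (hpa' : ∀ t : ℝ, 0 ≤ t → |deriv pa t| ≤ ψ / (N : ℝ)) :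
    ∃ γp > (0 : ℝ), ∀ κ > (0 : ℝ), ∀ phat : ℝ → Fin N → ℝ,
      -- the leader-following estimator dynamics
      (∀ i, ∀ t : ℝ, 0 ≤ t → HasDerivAt (fun s => phat s i)
        (-κ * ((∑ j, (G.adjMatrix ℝ) i j * (phat t i - phat t j))
          + b i * (phat t i - pa t))) t) →
      (∀ i, phat 0 i = 0) →
      -- limsup_{t→∞} |p̂ₐᵢ(t) − pₐ(t)| ≤ ψ γₚ / κ
      ∀ i, ∀ ε > (0 : ℝ), ∀ᶠ t in atTop, |phat t i - pa t| ≤ ψ * γp / κ + ε := by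
  obtain ⟨i0, hi0⟩ := hb1
  have hN : 0 < N := i0.pos
  have hNR : (0 : ℝ) < N := Nat.cast_pos.2 hN
  set A : Matrix (Fin N) (Fin N) ℝ := G.adjMatrix ℝ with hA
  have hsymm : ∀ i j, A i j = A j i := fun i j => by
    simp [hA, SimpleGraph.adjMatrix_apply, G.adj_comm]
  have hA0 : ∀ i j, 0 ≤ A i j := fun i j => by
    simp only [hA, SimpleGraph.adjMatrix_apply]
    split_ifs <;> norm_num
  have hb0 : ∀ i, 0 ≤ b i := fun i => by rcases hb i with h | h <;> rw [h] <;> norm_num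
  -- definiteness
  have hdef : ∀ x : Fin N → ℝ, quadB A b x = 0 → x = 0 := by
    intro x hx
    have h2 := two_quadB A b hsymm x
    rw [hx, mul_zero] at h2
    have h1 : 0 ≤ ∑ i, ∑ j, A i j * (x i - x j) ^ 2 :=
      Finset.sum_nonneg fun i _ => Finset.sum_nonneg fun j _ =>
        mul_nonneg (hA0 i j) (sq_nonneg _)
    have h3 : 0 ≤ ∑ i, b i * x i ^ 2 :=
      Finset.sum_nonneg fun i _ => mul_nonneg (hb0 i) (sq_nonneg _)
    have hz1 : (∑ i, ∑ j, A i j * (x i - x j) ^ 2) = 0 := by linarith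
    have hz2 : (∑ i, b i * x i ^ 2) = 0 := by linarith
    have hadj : ∀ i j : Fin N, G.Adj i j → x i = x j := by
      intro i j hij
      have hrow := (Finset.sum_eq_zero_iff_of_nonneg fun i _ =>
        Finset.sum_nonneg fun j _ => mul_nonneg (hA0 i j) (sq_nonneg _)).1 hz1 i
        (Finset.mem_univ i)
      have hterm := (Finset.sum_eq_zero_iff_of_nonneg fun j _ =>
        mul_nonneg (hA0 i j) (sq_nonneg _)).1 hrow j (Finset.mem_univ j)
      have hAij : A i j = 1 := by simp [hA, SimpleGraph.adjMatrix_apply, hij]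
      rw [hAij, one_mul, pow_eq_zero_iff (two_ne_zero), sub_eq_zero] at hterm
      exact hterm
    have hwalk : ∀ (i j : Fin N) (w : G.Walk i j), x i = x j := by
      intro i j w
      induction w with
      | nil => rfl
      | cons h p ih => exact (hadj _ _ h).trans ih
    have hx0 : x i0 = 0 := by
      have hterm := (Finset.sum_eq_zero_iff_of_nonneg fun i _ =>
        mul_nonneg (hb0 i) (sq_nonneg _)).1 hz2 i0 (Finset.mem_univ i0)
      rw [hi0, one_mul, pow_eq_zero_iff (two_ne_zero)] at hterm
      exact hterm
    funext i
    obtain ⟨w⟩ := hG.preconnected i i0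
    rw [Pi.zero_apply, hwalk i i0 w, hx0]
  obtain ⟨lam, hlam, hquad⟩ := exists_lam A b hsymm hA0 hb0 hN hdef
  have hsN : (0 : ℝ) < Real.sqrt N := Real.sqrt_pos.2 hNR
  refine ⟨1 / (Real.sqrt N * lam), by positivity, ?_⟩
  intro κ hκ phat hdyn h0 i ε hε
  have hpad : ∀ t : ℝ, HasDerivAt pa (deriv pa t) t := fun t =>
    ((hpa.differentiable one_ne_zero) t).hasDerivAt
  set e : ℝ → Fin N → ℝ := fun t i => phat t i - pa t with he
  set f : ℝ → ℝ := fun t => ∑ i, (phat t i - pa t) ^ 2 with hf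
  set F' : ℝ → ℝ := fun t => ∑ i,
    2 * (phat t i - pa t) *
      (-κ * ((∑ j, A i j * (phat t i - phat t j)) + b i * (phat t i - pa t))
        - deriv pa t) with hF'
  have hf' : ∀ t : ℝ, 0 ≤ t → HasDerivAt f (F' t) t := by
    intro t ht
    have : ∀ i ∈ Finset.univ, HasDerivAt (fun s => (phat s i - pa s) ^ 2)
        (2 * (phat t i - pa t) *
          (-κ * ((∑ j, A i j * (phat t i - phat t j)) + b i * (phat t i - pa t))
            - deriv pa t)) t := by
      intro i _
      have hd := ((hdyn i t ht).fun_sub (hpad t)).fun_pow 2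
      exact hd.congr_deriv (by ring)
    exact HasDerivAt.fun_sum this
  set K : ℝ := -(κ * lam) with hK
  set ε0 : ℝ := ψ ^ 2 / (N * κ * lam) with hε0
  have hKneg : K < 0 := by simp only [hK, neg_neg, neg_lt_zero]; positivity
  have hε0pos : 0 < ε0 := by rw [hε0]; positivity
  -- the differential inequality
  have hbound : ∀ t : ℝ, 0 ≤ t → F' t ≤ K * f t + ε0 := by
    intro t ht
    have hq := hquad (fun i => phat t i - pa t)
    have hd := hpa' t ht
    set d := deriv pa t with hdd
    have hFeq : F' t = -(2 * κ) * quadB A b (fun i => phat t i - pa t)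
        + ∑ i, (-2 * d) * (phat t i - pa t) := by
      rw [hF']
      unfold quadB
      rw [Finset.mul_sum, ← Finset.sum_add_distrib]
      refine Finset.sum_congr rfl fun k _ => ?_
      have hinner : (∑ j, A k j * (phat t k - phat t j))
          = ∑ j, A k j * ((phat t k - pa t) - (phat t j - pa t)) :=
        Finset.sum_congr rfl fun j _ => by ring
      rw [hinner]
      ring
    have hK0 : (0 : ℝ) < κ * lam := by positivity
    have hterm : ∀ k : Fin N, (-2 * d) * (phat t k - pa t)
        ≤ κ * lam * (phat t k - pa t) ^ 2 + (ψ / N) ^ 2 / (κ * lam) := by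
      intro k
      set y := phat t k - pa t
      have hd2 : d ^ 2 ≤ (ψ / N) ^ 2 := by
        have h1 := abs_le.1 hd
        nlinarith [h1.1, h1.2]
      have hmain : -2 * d * y - κ * lam * y ^ 2 ≤ (ψ / N) ^ 2 / (κ * lam) := by
        rw [le_div_iff₀ hK0]
        calc (-2 * d * y - κ * lam * y ^ 2) * (κ * lam)
            = -((κ * lam * y + d) ^ 2) + d ^ 2 := by ring
          _ ≤ d ^ 2 := by nlinarith [sq_nonneg (κ * lam * y + d)]
          _ ≤ (ψ / N) ^ 2 := hd2
      linarith
    have hsum : ∑ k, (-2 * d) * (phat t k - pa t)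
        ≤ κ * lam * f t + N * ((ψ / N) ^ 2 / (κ * lam)) := by
      calc ∑ k, (-2 * d) * (phat t k - pa t)
          ≤ ∑ k, (κ * lam * (phat t k - pa t) ^ 2 + (ψ / N) ^ 2 / (κ * lam)) :=
            Finset.sum_le_sum fun k _ => hterm k
        _ = κ * lam * f t + N * ((ψ / N) ^ 2 / (κ * lam)) := by
            rw [Finset.sum_add_distrib, Finset.sum_const, hf, Finset.mul_sum]
            simp [nsmul_eq_mul]
    have hNcalc : (N : ℝ) * ((ψ / N) ^ 2 / (κ * lam)) = ε0 := by
      rw [hε0]; field_simp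
    have hquadf : -(2 * κ) * quadB A b (fun i => phat t i - pa t)
        ≤ -(2 * κ) * (lam * f t) := by
      have h2κ : (0 : ℝ) < 2 * κ := by positivity
      nlinarith [hq]
    rw [hFeq, hK]
    rw [hNcalc] at hsum
    linarith [hsum, hquadf]
  -- continuity of f on every [0, T]
  have hfc : ∀ T : ℝ, ContinuousOn f (Set.Icc 0 T) := by
    intro T
    apply continuousOn_finset_sum
    intro k _
    apply ContinuousOn.pow
    apply ContinuousOn.sub
    · intro s hs
      exact (hdyn k s hs.1).continuousAt.continuousWithinAt
    · exact (hpa.continuous.continuousOn)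
  -- Grönwall
  have hgron : ∀ T : ℝ, 0 ≤ T → f T ≤ gronwallBound (f 0) K ε0 T := by
    intro T hT
    have := le_gronwallBound_of_liminf_deriv_right_le (hfc T)
      (fun x hx r hr =>
        ((hf' x hx.1).hasDerivWithinAt.liminf_right_slope_le hr))
      le_rfl
      (fun x hx => hbound x hx.1)
      T (Set.right_mem_Icc.2 hT)
    simpa using this
  have hKne : K ≠ 0 := hKneg.ne
  have hgb : ∀ T : ℝ, gronwallBound (f 0) K ε0 T
      ≤ f 0 * Real.exp (K * T) + ε0 / (κ * lam) := by
    intro T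
    rw [gronwallBound_of_K_ne_0 hKne]
    beta_reduce
    have hexp : 0 < Real.exp (K * T) := Real.exp_pos _
    have hc : ε0 / K * (Real.exp (K * T) - 1)
        = ε0 / (κ * lam) * (1 - Real.exp (K * T)) := by
      rw [hK]
      field_simp
      ring
    rw [hc]
    have hcpos : 0 ≤ ε0 / (κ * lam) := by positivity
    nlinarith [hexp, hcpos]
  -- the limit M
  set M : ℝ := ψ * (1 / (Real.sqrt N * lam)) / κ with hM
  have hMpos : 0 < M := by rw [hM]; positivity
  have hM2 : M ^ 2 = ε0 / (κ * lam) := by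
    rw [hM, hε0]
    have hs : Real.sqrt N * Real.sqrt N = N := Real.mul_self_sqrt hNR.le
    field_simp
    nlinarith [hs]
  -- eventual smallness of the transient term
  have hexp0 : Tendsto (fun t : ℝ => f 0 * Real.exp (K * t)) atTop (𝓝 0) := by
    have h1 : Tendsto (fun t : ℝ => K * t) atTop atBot :=
      (tendsto_const_mul_atBot_of_neg hKneg).2 tendsto_id
    have h2 : Tendsto (fun t : ℝ => Real.exp (K * t)) atTop (𝓝 0) :=
      Real.tendsto_exp_atBot.comp h1
    simpa using h2.const_mul (f 0)
  have hev : ∀ᶠ t : ℝ in atTop, f 0 * Real.exp (K * t) < ε ^ 2 :=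
    hexp0.eventually (gt_mem_nhds (by positivity))
  filter_upwards [hev, eventually_ge_atTop (0 : ℝ)] with t hlt ht
  have h1 : (phat t i - pa t) ^ 2 ≤ f t := by
    have := Finset.single_le_sum (f := fun k => (phat t k - pa t) ^ 2)
      (fun k _ => sq_nonneg _) (Finset.mem_univ i)
    simpa [hf] using this
  have h2 : f t ≤ f 0 * Real.exp (K * t) + ε0 / (κ * lam) :=
    (hgron t ht).trans (hgb t)
  have h3 : (phat t i - pa t) ^ 2 ≤ M ^ 2 + ε ^ 2 := by
    rw [hM2]; linarith
  have h4 : |phat t i - pa t| ≤ M + ε := by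
    nlinarith [sq_abs (phat t i - pa t), abs_nonneg (phat t i - pa t), hMpos, hε]
  simpa [hM] using h4
end

section
/- Let L be the Laplacian matrix of an undirected connected graph on N vertices and let B = diag(b_1,…,b_N) with b_i ≥ 0 for all i and b_i > 0 for at least one i. Then the symmetric matrix L + B is positive definite. -/
open Matrix

/-- for the Laplacian `L` of an undirected connected graph and a nonnegative
diagonal matrix `B = diag(b)` with at least one positive entry, `L + B` is positive definite. -/
theorem statement2
    (N : ℕ) (G : SimpleGraph (Fin N)) [DecidableRel G.Adj] (hG : G.Connected)
    (b : Fin N → ℝ) (hb : ∀ i, 0 ≤ b i) (hb1 : ∃ i, 0 < b i) :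
    (G.lapMatrix ℝ + Matrix.diagonal b).PosDef := by
  rw [posDef_iff_dotProduct_mulVec]
  constructor
  · exact IsHermitian.add (G.posSemidef_lapMatrix ℝ).1 (isHermitian_diagonal b)
  · intro x hx
    have hL : 0 ≤ x ⬝ᵥ (G.lapMatrix ℝ) *ᵥ x := by
      have := (G.posSemidef_lapMatrix ℝ).dotProduct_mulVec_nonneg x
      simpa using this
    have hBval : x ⬝ᵥ (Matrix.diagonal b) *ᵥ x = ∑ i, b i * (x i)^2 := by
      simp only [dotProduct, mulVec_diagonal]
      exact Finset.sum_congr rfl fun i _ => by ring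
    have hB : 0 ≤ x ⬝ᵥ (Matrix.diagonal b) *ᵥ x := by
      rw [hBval]
      exact Finset.sum_nonneg fun i _ => mul_nonneg (hb i) (sq_nonneg _)
    simp only [add_mulVec, dotProduct_add, star_trivial, RCLike.re_to_real]
    rcases lt_or_eq_of_le hL with h | h
    · linarith
    rcases lt_or_eq_of_le hB with h2 | h2
    · linarith
    -- both zero: derive contradiction
    exfalso
    have hconst : ∀ i j, G.Reachable i j → x i = x j := by
      rw [← SimpleGraph.lapMatrix_toLinearMap₂'_apply'_eq_zero_iff_forall_reachable]
      rw [toLinearMap₂'_apply']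
      simpa using h.symm
    obtain ⟨j, hj⟩ := hb1
    have hsum : ∑ i, b i * (x i)^2 = 0 := by rw [← hBval, ← h2]
    have hterm : b j * (x j)^2 = 0 := by
      exact (Finset.sum_eq_zero_iff_of_nonneg
        (fun i _ => mul_nonneg (hb i) (sq_nonneg (x i)))).mp hsum j (Finset.mem_univ j)
    have hxj : x j = 0 := by
      have := (mul_eq_zero.mp hterm).resolve_left (ne_of_gt hj)
      exact pow_eq_zero_iff (n := 2) (by norm_num) |>.mp this
    apply hx
    funext i
    have := hconst i j (hG i j)
    simp [this, hxj]
end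

section
/- Let L ∈ ℝ^{N×N} be the Laplacian of an undirected connected graph (so L is symmetric positive semidefinite and its kernel is the span of 1_N). Define the block matrix L' = [[L + I_N, −I_N], [−I_N, I_N]] ∈ ℝ^{2N×2N}. Then L' is symmetric, positive semidefinite, satisfies L' 1_{2N} = 0, and its kernel is exactly the span of 1_{2N}; consequently its second smallest eigenvalue λ_2' is strictly positive. -/
open Matrix
open scoped InnerProductSpace

/-- for the Laplacian `L` of an undirected connected graph on `N` vertices, the
block matrix `L' = [[L + I, −I], [−I, I]]` is symmetric, positive semidefinite, satisfies
`L' 1 = 0`, its kernel is exactly the span of the all-ones vector, and its second smallest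
eigenvalue is strictly positive (it is a positive eigenvalue `λ₂'` attained on the orthogonal
complement of the all-ones vector, with `δᵀ L' δ ≥ λ₂' ‖δ‖²` there). -/
theorem statement7
    (N : ℕ) (G : SimpleGraph (Fin N)) [DecidableRel G.Adj] (hG : G.Connected)
    (L' : Matrix (Fin N ⊕ Fin N) (Fin N ⊕ Fin N) ℝ)
    (hL' : L' = Matrix.fromBlocks (G.lapMatrix ℝ + 1) (-1) (-1) (1 : Matrix (Fin N) (Fin N) ℝ)) :
    L'.IsSymm ∧
    L'.PosSemidef ∧
    L'.mulVec (fun _ => (1 : ℝ)) = 0 ∧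
    (∀ v : Fin N ⊕ Fin N → ℝ, L'.mulVec v = 0 ↔ ∃ c : ℝ, v = fun _ => c) ∧
    (∃ lam2' > (0 : ℝ),
      (∃ v : Fin N ⊕ Fin N → ℝ, v ≠ 0 ∧ (∑ k, v k) = 0 ∧ L'.mulVec v = lam2' • v) ∧
      ∀ δ : Fin N ⊕ Fin N → ℝ, (∑ k, δ k) = 0 →
        lam2' * (∑ k, δ k ^ 2) ≤ δ ⬝ᵥ L'.mulVec δ) := by
  haveI : Nonempty (Fin N) := hG.nonempty
  have hN : 0 < N := Fin.pos_iff_nonempty.mpr ‹_›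
  -- basic block computations
  have hveq : ∀ v : Fin N ⊕ Fin N → ℝ, v = Sum.elim (v ∘ Sum.inl) (v ∘ Sum.inr) := by
    intro v; funext k; cases k <;> rfl
  have hmv : ∀ x y : Fin N → ℝ,
      L' *ᵥ (Sum.elim x y) = Sum.elim ((G.lapMatrix ℝ) *ᵥ x + (x - y)) (y - x) := by
    intro x y
    rw [hL', fromBlocks_mulVec]
    funext k
    cases k <;>
      simp [Matrix.add_mulVec, Matrix.neg_mulVec, Matrix.one_mulVec] <;> ring
  have hq : ∀ x y : Fin N → ℝ,
      (Sum.elim x y) ⬝ᵥ (L' *ᵥ Sum.elim x y)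
        = x ⬝ᵥ ((G.lapMatrix ℝ) *ᵥ x) + (x - y) ⬝ᵥ (x - y) := by
    intro x y
    rw [hmv, sumElim_dotProduct_sumElim]
    simp [dotProduct_add, dotProduct_sub, sub_dotProduct, dotProduct_comm x y]
    ring
  -- symmetry
  have hsymE : L'ᵀ = L' := by
    rw [hL', fromBlocks_transpose]
    have hLt : (G.lapMatrix ℝ)ᵀ = G.lapMatrix ℝ := G.isSymm_lapMatrix ℝ
    simp [transpose_add, transpose_one, hLt]
  have hsym : L'.IsSymm := hsymE
  -- quadratic form nonneg
  have hqnn : ∀ v : Fin N ⊕ Fin N → ℝ, 0 ≤ v ⬝ᵥ (L' *ᵥ v) := by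
    intro v
    rw [hveq v, hq]
    have h1 := (SimpleGraph.posSemidef_lapMatrix ℝ G).dotProduct_mulVec_nonneg (v ∘ Sum.inl)
    rw [star_trivial] at h1
    have h2 : 0 ≤ (v ∘ Sum.inl - v ∘ Sum.inr) ⬝ᵥ (v ∘ Sum.inl - v ∘ Sum.inr) :=
      Finset.sum_nonneg fun i _ => mul_self_nonneg _
    linarith
  have hpsd : L'.PosSemidef := by
    refine .of_dotProduct_mulVec_nonneg ?_ (fun v => by rw [star_trivial]; exact hqnn v)
    rw [Matrix.IsHermitian, conjTranspose_eq_transpose_of_trivial]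
    exact hsymE
  -- L' 1 = 0
  have hone : L' *ᵥ (fun _ => (1 : ℝ)) = 0 := by
    have h : (fun _ : Fin N ⊕ Fin N => (1:ℝ)) = Sum.elim (fun _ => (1:ℝ)) (fun _ => 1) := by
      funext k; cases k <;> rfl
    rw [h, hmv, G.lapMatrix_mulVec_const_eq_zero]
    funext k; cases k <;> simp
  -- kernel
  have hker : ∀ v : Fin N ⊕ Fin N → ℝ, L' *ᵥ v = 0 ↔ ∃ c : ℝ, v = fun _ => c := by
    intro v
    constructor
    · intro hv
      set x := v ∘ Sum.inl with hx
      set y := v ∘ Sum.inr with hy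
      have h0 : x ⬝ᵥ ((G.lapMatrix ℝ) *ᵥ x) + (x - y) ⬝ᵥ (x - y) = 0 := by
        rw [← hq x y, ← hveq v, hv, dotProduct_zero]
      have h1 := (SimpleGraph.posSemidef_lapMatrix ℝ G).dotProduct_mulVec_nonneg x
      rw [star_trivial] at h1
      have h2 : 0 ≤ (x - y) ⬝ᵥ (x - y) := Finset.sum_nonneg fun i _ => mul_self_nonneg _
      have hxy : (x - y) ⬝ᵥ (x - y) = 0 := by linarith
      have hLx : x ⬝ᵥ ((G.lapMatrix ℝ) *ᵥ x) = 0 := by linarith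
      have hxyz : x = y := sub_eq_zero.mp (dotProduct_self_eq_zero.mp hxy)
      have hreach : ∀ i j : Fin N, G.Reachable i j → x i = x j := by
        rw [← G.lapMatrix_toLinearMap₂'_apply'_eq_zero_iff_forall_reachable x,
          Matrix.toLinearMap₂'_apply']
        exact hLx
      obtain ⟨i₀⟩ := (inferInstance : Nonempty (Fin N))
      refine ⟨x i₀, ?_⟩
      funext k
      cases k with
      | inl i => exact hreach i i₀ (hG.preconnected i i₀)
      | inr i =>
          calc v (Sum.inr i) = y i := rfl
            _ = x i := by rw [hxyz]
            _ = x i₀ := hreach i i₀ (hG.preconnected i i₀)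
    · rintro ⟨c, rfl⟩
      have h : (fun _ : Fin N ⊕ Fin N => c) = c • (fun _ => (1:ℝ)) := by
        funext k; simp
      rw [h, Matrix.mulVec_smul, hone, smul_zero]
  refine ⟨hsym, hpsd, hone, hker, ?_⟩
  -- eigenvalue part
  have hmulVec_sum : ∀ w : Fin N ⊕ Fin N → ℝ, ∑ k, (L' *ᵥ w) k = 0 := by
    intro w
    have h1 : ∑ k, (L' *ᵥ w) k = (fun _ => (1:ℝ)) ⬝ᵥ (L' *ᵥ w) := by
      simp [dotProduct]
    rw [h1, dotProduct_mulVec]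
    have h2 : (fun _ => (1:ℝ)) ᵥ* L' = L' *ᵥ (fun _ => (1:ℝ)) := by
      rw [← Matrix.mulVec_transpose, hsymE]
    rw [h2, hone, zero_dotProduct]
  have hsymdot : ∀ u v : Fin N ⊕ Fin N → ℝ, (L' *ᵥ u) ⬝ᵥ v = u ⬝ᵥ (L' *ᵥ v) := by
    intro u v
    rw [dotProduct_mulVec, ← Matrix.mulVec_transpose, hsymE]
  let T : EuclideanSpace ℝ (Fin N ⊕ Fin N) →ₗ[ℝ] EuclideanSpace ℝ (Fin N ⊕ Fin N) :=
    { toFun := fun w => WithLp.toLp 2 (L' *ᵥ w : Fin N ⊕ Fin N → ℝ)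
      map_add' := fun a b => congrArg (WithLp.toLp 2) (Matrix.mulVec_add L' a b)
      map_smul' := fun c a => congrArg (WithLp.toLp 2) (Matrix.mulVec_smul L' c a) }
  have hinner : ∀ u v : EuclideanSpace ℝ (Fin N ⊕ Fin N), ⟪u, v⟫_ℝ = u ⬝ᵥ v := by
    intro u v
    rw [PiLp.inner_apply]
    simp [dotProduct, mul_comm]
  have hinnerT : ∀ u v : EuclideanSpace ℝ (Fin N ⊕ Fin N),
      ⟪T u, v⟫_ℝ = (L' *ᵥ u) ⬝ᵥ v := fun u v => hinner (T u) v
  have hTsym : T.IsSymmetric := by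
    intro u v
    rw [hinnerT, hinner]
    exact hsymdot u v
  let W : Submodule ℝ (EuclideanSpace ℝ (Fin N ⊕ Fin N)) :=
    { carrier := {w | ∑ k, w k = 0}
      add_mem' := by
        intro a b ha hb
        simp only [Set.mem_setOf_eq] at ha hb ⊢
        have h : ∀ k, (a + b) k = a k + b k := fun k => rfl
        simp only [h, Finset.sum_add_distrib, ha, hb, add_zero]
      zero_mem' := by
        show ∑ k : Fin N ⊕ Fin N, (0 : EuclideanSpace ℝ (Fin N ⊕ Fin N)) k = 0
        have h : ∀ k, (0 : EuclideanSpace ℝ (Fin N ⊕ Fin N)) k = 0 := fun k => rfl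
        simp only [h, Finset.sum_const_zero]
      smul_mem' := by
        intro c a ha
        simp only [Set.mem_setOf_eq] at ha ⊢
        have h : ∀ k, (c • a) k = c * a k := fun k => rfl
        simp only [h, ← Finset.mul_sum, ha, mul_zero] }
  have hWmem : ∀ w : EuclideanSpace ℝ (Fin N ⊕ Fin N), w ∈ W ↔ ∑ k, w k = 0 :=
    fun w => Iff.rfl
  have hinvW : ∀ w ∈ W, T w ∈ W := fun w _ => hmulVec_sum w
  let S : W →ₗ[ℝ] W := T.restrict hinvW
  have hSsym : S.IsSymmetric := by
    intro u v
    have h1 : ⟪S u, v⟫_ℝ = ⟪T (u : EuclideanSpace ℝ (Fin N ⊕ Fin N)), (v : EuclideanSpace ℝ (Fin N ⊕ Fin N))⟫_ℝ := rfl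
    have h2 : ⟪u, S v⟫_ℝ = ⟪(u : EuclideanSpace ℝ (Fin N ⊕ Fin N)), T (v : EuclideanSpace ℝ (Fin N ⊕ Fin N))⟫_ℝ := rfl
    rw [h1, h2, hTsym]
  -- nontriviality of W
  obtain ⟨i₀⟩ := (inferInstance : Nonempty (Fin N))
  have hcard : 0 < Fintype.card (Fin N ⊕ Fin N) := by
    rw [Fintype.card_sum, Fintype.card_fin]
    omega
  have hw₀mem : (WithLp.toLp 2 (Pi.single (Sum.inl i₀) (1:ℝ) - Pi.single (Sum.inr i₀) (1:ℝ)) :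
      EuclideanSpace ℝ (Fin N ⊕ Fin N)) ∈ W := by
    rw [hWmem]
    have h : ∀ k, (WithLp.toLp 2 (Pi.single (Sum.inl i₀) (1:ℝ) - Pi.single (Sum.inr i₀) (1:ℝ)) :
        EuclideanSpace ℝ (Fin N ⊕ Fin N)) k
        = (Pi.single (Sum.inl i₀) (1:ℝ) : Fin N ⊕ Fin N → ℝ) k
          - (Pi.single (Sum.inr i₀) (1:ℝ) : Fin N ⊕ Fin N → ℝ) k := fun k => rfl
    simp only [h, Finset.sum_sub_distrib, Finset.sum_pi_single']
    simp
  have hw₀ne : (WithLp.toLp 2 (Pi.single (Sum.inl i₀) (1:ℝ) - Pi.single (Sum.inr i₀) (1:ℝ)) :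
      EuclideanSpace ℝ (Fin N ⊕ Fin N)) ≠ 0 := by
    intro h
    have h1 : (Pi.single (Sum.inl i₀) (1:ℝ) - Pi.single (Sum.inr i₀) (1:ℝ) :
        Fin N ⊕ Fin N → ℝ) (Sum.inl i₀) = 0 :=
        congrArg (fun z : EuclideanSpace ℝ (Fin N ⊕ Fin N) => z.ofLp (Sum.inl i₀)) h
    simp [Pi.single_apply] at h1
  haveI : Nontrivial W :=
    ⟨⟨⟨_, hw₀mem⟩, 0, fun h => hw₀ne (congrArg Subtype.val h)⟩⟩
  haveI : Nonempty { x : W // x ≠ 0 } :=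
    ⟨⟨⟨_, hw₀mem⟩, fun h => hw₀ne (congrArg Subtype.val h)⟩⟩
  -- the infimum of the Rayleigh quotient is an eigenvalue
  set lam : ℝ := ⨅ x : { x : W // x ≠ 0 },
      RCLike.re (⟪S (x : W), (x : W)⟫_ℝ) / ‖(x : W)‖ ^ 2 with hlam
  have heig : Module.End.HasEigenvalue S (lam : ℝ) :=
    hSsym.hasEigenvalue_iInf_of_finiteDimensional
  obtain ⟨w, hw⟩ := heig.exists_hasEigenvector
  have hwne : (w : EuclideanSpace ℝ (Fin N ⊕ Fin N)) ≠ 0 := fun h => hw.2 (Subtype.ext h)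
  have hwne' : (w : EuclideanSpace ℝ (Fin N ⊕ Fin N)).ofLp ≠ 0 :=
    fun h => hwne (congrArg (WithLp.toLp 2) h)
  have hweig : L' *ᵥ (w : EuclideanSpace ℝ (Fin N ⊕ Fin N)) = lam • (w : EuclideanSpace ℝ (Fin N ⊕ Fin N)) := by
    calc L' *ᵥ (w : EuclideanSpace ℝ (Fin N ⊕ Fin N)) = ((S w : W) : EuclideanSpace ℝ (Fin N ⊕ Fin N)) := rfl
      _ = ((lam • w : W) : EuclideanSpace ℝ (Fin N ⊕ Fin N)) := by rw [hw.apply_eq_smul]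
      _ = lam • (w : EuclideanSpace ℝ (Fin N ⊕ Fin N)) := rfl
  -- Rayleigh quotient values
  have hray : ∀ u : { x : W // x ≠ 0 },
      RCLike.re (⟪S (u : W), (u : W)⟫_ℝ) / ‖(u : W)‖ ^ 2
        = (((u : W) : EuclideanSpace ℝ (Fin N ⊕ Fin N)) ⬝ᵥ
            (L' *ᵥ ((u : W) : EuclideanSpace ℝ (Fin N ⊕ Fin N)))) / ‖(u : W)‖ ^ 2 := by
    intro u
    congr 1
  have hraynn : ∀ u : { x : W // x ≠ 0 },
      0 ≤ RCLike.re (⟪S (u : W), (u : W)⟫_ℝ) / ‖(u : W)‖ ^ 2 := by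
    intro u
    rw [hray]
    exact div_nonneg (hqnn _) (sq_nonneg _)
  have hbdd : BddBelow (Set.range fun u : { x : W // x ≠ 0 } =>
      RCLike.re (⟪S (u : W), (u : W)⟫_ℝ) / ‖(u : W)‖ ^ 2) := by
    refine ⟨0, ?_⟩
    rintro r ⟨u, rfl⟩
    exact hraynn u
  -- norm-sum identity
  have hnormsq : ∀ u : EuclideanSpace ℝ (Fin N ⊕ Fin N), ‖u‖ ^ 2 = ∑ k, u k ^ 2 := by
    intro u
    rw [← real_inner_self_eq_norm_sq, hinner]
    simp [dotProduct, sq]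
  -- lam > 0
  have hwdot : (0:ℝ) < (w : EuclideanSpace ℝ (Fin N ⊕ Fin N)) ⬝ᵥ (w : EuclideanSpace ℝ (Fin N ⊕ Fin N)) := by
    rcases lt_or_eq_of_le (Finset.sum_nonneg fun i _ =>
      mul_self_nonneg ((w : EuclideanSpace ℝ (Fin N ⊕ Fin N)) i)) with h | h
    · exact h
    · exact absurd (dotProduct_self_eq_zero.mp h.symm) hwne'
  have hlamnn : 0 ≤ lam := le_ciInf hraynn
  have hlampos : 0 < lam := by
    rcases lt_or_eq_of_le hlamnn with h | h
    · exact h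
    · exfalso
      have h0 : L' *ᵥ (w : EuclideanSpace ℝ (Fin N ⊕ Fin N)) = 0 := by
        rw [hweig, ← h, zero_smul]
      obtain ⟨c, hc⟩ := (hker _).mp h0
      have hsum : ∑ k, (w : EuclideanSpace ℝ (Fin N ⊕ Fin N)) k = 0 := w.2
      rw [hc, Finset.sum_const, Finset.card_univ, nsmul_eq_mul] at hsum
      have hcne : (Fintype.card (Fin N ⊕ Fin N) : ℝ) ≠ 0 := Nat.cast_ne_zero.mpr hcard.ne'
      have hc0 : c = 0 := (mul_eq_zero.mp hsum).resolve_left hcne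
      apply hwne'
      rw [hc, hc0]
      rfl
  refine ⟨lam, hlampos, ⟨(w : EuclideanSpace ℝ (Fin N ⊕ Fin N)), hwne', w.2, hweig⟩, ?_⟩
  intro δ hδ
  by_cases hδ0 : δ = 0
  · subst hδ0
    simp
  · let δE : EuclideanSpace ℝ (Fin N ⊕ Fin N) := WithLp.toLp 2 δ
    have hδW : δE ∈ W := hδ
    have hδEne : δE ≠ 0 := fun h => hδ0 (congrArg WithLp.ofLp h)
    have hune : (⟨δE, hδW⟩ : W) ≠ 0 := fun h => hδEne (congrArg Subtype.val h)
    have hle := ciInf_le hbdd (⟨⟨δE, hδW⟩, hune⟩ : { x : W // x ≠ 0 })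
    rw [hray] at hle
    have hle2 : lam ≤ (δE ⬝ᵥ (L' *ᵥ δE)) / ‖δE‖ ^ 2 := hle
    have hnpos : (0:ℝ) < ‖δE‖ ^ 2 := by
      have h := norm_ne_zero_iff.mpr hδEne
      positivity
    have h2 := (le_div_iff₀ hnpos).mp hle2
    calc lam * ∑ k, δ k ^ 2 = lam * ‖δE‖ ^ 2 := by rw [hnormsq δE]
      _ ≤ δ ⬝ᵥ (L' *ᵥ δ) := h2
end

section
/- Consider N battery units over an undirected connected communication graph running the privacy-preserving decomposed average unit state estimator: dx̂_{a,i}^α/dt = ẋ_i^α(t) − β Σ_{j=1}^N a_ij (x̂_{a,i}^α(t) − x̂_{a,j}^α(t)) − β (x̂_{a,i}^α(t) − x̂_{a,i}^β(t)) and dx̂_{a,i}^β/dt = ẋ_i^β(t) − β (x̂_{a,i}^β(t) − x̂_{a,i}^α(t)), with initializations x̂_{a,i}^α(0) = x_i^α(0), x̂_{a,i}^β(0) = x_i^β(0), where x_i^α(0) + x_i^β(0) = 2η x_i(0) and ẋ_i^α(t) + ẋ_i^β(t) = 2η ẋ_i(t) with ẋ_i^α, ẋ_i^β bounded. Then both tracking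 deviations x̂_{a,i}^α(t) − η x_a(t) and x̂_{a,i}^β(t) − η x_a(t) are ultimately bounded; precisely, limsup_{t→∞} |x̂_{a,i}^α(t) − η x_a(t)| ≤ γ_s'/(β λ_2') and limsup_{t→∞} |x̂_{a,i}^β(t) − η x_a(t)| ≤ γ_s'/(β λ_2'), where γ_s' = sup_{τ≥0} ‖(I_{2N} − (1/(2N)) 1_{2N} 1_{2N}^T) ẋ^{decomp}(τ)‖ (assumed finite), ẋ^{decomp} stacks the 2N derivatives (ẋ_1^α,…,ẋ_N^α, ẋ_1^β,…,ẋ_N^β), and λ_2' > 0 is the second smallest eigenvalue of L' = [[L + I_N, −I_N], [−I_N, I_N]]. In particular the bounds can be made arbitrarily small by choosing β sufficiently large. -/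
open Filter Matrix

lemma Lp_apply {N : ℕ} (G : SimpleGraph (Fin N)) [DecidableRel G.Adj] (v : Fin N ⊕ Fin N → ℝ) :
    ∀ k, (Matrix.fromBlocks (G.lapMatrix ℝ + 1) (-1) (-1)
        (1 : Matrix (Fin N) (Fin N) ℝ)).mulVec v k
      = Sum.elim
          (fun i => (∑ j, (G.adjMatrix ℝ) i j * (v (Sum.inl i) - v (Sum.inl j)))
            + (v (Sum.inl i) - v (Sum.inr i)))
          (fun i => v (Sum.inr i) - v (Sum.inl i)) k := by
  have hms : ∀ (w : Fin N → ℝ) i, ∑ j, (G.adjMatrix ℝ) i j * w j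
      = ∑ u ∈ G.neighborFinset i, w u := by
    intro w i
    rw [← SimpleGraph.adjMatrix_mulVec_apply]
    rfl
  have hlap : ∀ (w : Fin N → ℝ) i, ∑ j, G.lapMatrix ℝ i j * w j
      = G.degree i * w i - ∑ u ∈ G.neighborFinset i, w u := by
    intro w i
    rw [← SimpleGraph.lapMatrix_mulVec_apply]
    rfl
  rintro (i | i) <;>
    simp only [Matrix.mulVec, dotProduct, Fintype.sum_sum_type,
      Matrix.fromBlocks_apply₁₁, Matrix.fromBlocks_apply₁₂, Matrix.fromBlocks_apply₂₁,
      Matrix.fromBlocks_apply₂₂, Matrix.add_apply, Matrix.one_apply, Matrix.neg_apply,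
      Sum.elim_inl, Sum.elim_inr, add_mul, neg_mul, ite_mul, one_mul, zero_mul,
      Finset.sum_add_distrib, Finset.sum_neg_distrib, Finset.sum_ite_eq,
      Finset.mem_univ, if_true, mul_sub, Finset.sum_sub_distrib, hms, hlap,
      Finset.sum_const, SimpleGraph.card_neighborFinset_eq_degree, nsmul_eq_mul] <;>
    ring

lemma Lp_sum_mulVec {N : ℕ} (G : SimpleGraph (Fin N)) [DecidableRel G.Adj]
    (v : Fin N ⊕ Fin N → ℝ) :
    ∑ k, (Matrix.fromBlocks (G.lapMatrix ℝ + 1) (-1) (-1)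
        (1 : Matrix (Fin N) (Fin N) ℝ)).mulVec v k = 0 := by
  have hsym : ∀ i j, (G.adjMatrix ℝ) i j = (G.adjMatrix ℝ) j i := by
    intro i j
    simp [SimpleGraph.adjMatrix_apply, G.adj_comm]
  rw [Fintype.sum_sum_type]
  simp only [Lp_apply, Sum.elim_inl, Sum.elim_inr]
  have h1 : ∑ i, ∑ j, (G.adjMatrix ℝ) i j * (v (Sum.inl i) - v (Sum.inl j)) = 0 := by
    have h2 : ∑ i, ∑ j, (G.adjMatrix ℝ) i j * v (Sum.inl i)
        = ∑ i, ∑ j, (G.adjMatrix ℝ) i j * v (Sum.inl j) := by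
      rw [Finset.sum_comm]
      refine Finset.sum_congr rfl fun i _ => Finset.sum_congr rfl fun j _ => by rw [hsym]
    simp only [mul_sub, Finset.sum_sub_distrib, h2, sub_self]
  simp only [Finset.sum_add_distrib, Finset.sum_sub_distrib, h1]
  ring

/-- Theorem 2: the privacy-preserving decomposed average unit state estimator
`dx̂ᵅₐᵢ/dt = ẋᵢᵅ − β Σⱼ aᵢⱼ(x̂ᵅₐᵢ − x̂ᵅₐⱼ) − β(x̂ᵅₐᵢ − x̂ᵝₐᵢ)`,
`dx̂ᵝₐᵢ/dt = ẋᵢᵝ − β(x̂ᵝₐᵢ − x̂ᵅₐᵢ)`, with the state-decomposition initializations, yields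
ultimately bounded tracking deviations from `η xₐ(t)`:
`limsup_{t→∞} |x̂ᵅₐᵢ(t) − η xₐ(t)| ≤ γₛ'/(β λ₂')` and likewise for `x̂ᵝₐᵢ`, where `γₛ'` is the
supremum over `τ ≥ 0` of `‖(I_{2N} − (1/(2N)) 𝟙𝟙ᵀ) ẋ^{decomp}(τ)‖` and `λ₂' > 0` is the second
smallest eigenvalue of `L' = [[L + I, −I], [−I, I]]`. -/
theorem statement9
    (N : ℕ) (G : SimpleGraph (Fin N)) [DecidableRel G.Adj] (hG : G.Connected)
    (η β : ℝ) (hη : 0 < η) (hβ : 0 < β)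
    (x xα xβ xhatα xhatβ : ℝ → Fin N → ℝ)
    (hx : ∀ i, ContDiff ℝ 1 (fun t => x t i))
    (hxα : ∀ i, ContDiff ℝ 1 (fun t => xα t i))
    (hxβ : ∀ i, ContDiff ℝ 1 (fun t => xβ t i))
    -- the decomposed derivative signals are bounded
    (hbdd : ∃ M : ℝ, ∀ i, ∀ t : ℝ, 0 ≤ t →
        |deriv (fun s => xα s i) t| ≤ M ∧ |deriv (fun s => xβ s i) t| ≤ M)
    -- state decomposition: xᵢᵅ(0) + xᵢᵝ(0) = 2η xᵢ(0) and ẋᵢᵅ + ẋᵢᵝ = 2η ẋᵢ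
    (h0 : ∀ i, xα 0 i + xβ 0 i = 2 * η * x 0 i)
    (hd : ∀ i, ∀ t : ℝ, 0 ≤ t →
        deriv (fun s => xα s i) t + deriv (fun s => xβ s i) t
          = 2 * η * deriv (fun s => x s i) t)
    -- decomposed estimator dynamics
    (hdynα : ∀ i, ∀ t : ℝ, 0 ≤ t → HasDerivAt (fun s => xhatα s i)
        (deriv (fun s => xα s i) t
          - β * ∑ j, (G.adjMatrix ℝ) i j * (xhatα t i - xhatα t j)
          - β * (xhatα t i - xhatβ t i)) t)
    (hdynβ : ∀ i, ∀ t : ℝ, 0 ≤ t → HasDerivAt (fun s => xhatβ s i)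
        (deriv (fun s => xβ s i) t - β * (xhatβ t i - xhatα t i)) t)
    (hinitα : ∀ i, xhatα 0 i = xα 0 i)
    (hinitβ : ∀ i, xhatβ 0 i = xβ 0 i)
    (γs' lam2' : ℝ)
    -- γₛ' = sup_{τ ≥ 0} ‖(I_{2N} − (1/(2N)) 1 1ᵀ) ẋ^{decomp}(τ)‖, assumed finite
    (hγ : IsLUB ((fun τ : ℝ => eucNorm (fun k : Fin N ⊕ Fin N =>
        Sum.elim (fun i => deriv (fun s => xα s i) τ)
                 (fun i => deriv (fun s => xβ s i) τ) k
          - ((∑ i, deriv (fun s => xα s i) τ) + ∑ i, deriv (fun s => xβ s i) τ)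
              / (2 * (N : ℝ)))) '' Set.Ici (0 : ℝ)) γs')
    -- λ₂' is the second smallest eigenvalue of L' = [[L + I, −I], [−I, I]]
    (hlam2pos : 0 < lam2')
    (hlam2eig : ∃ v : Fin N ⊕ Fin N → ℝ, v ≠ 0 ∧ (∑ k, v k) = 0 ∧
        (Matrix.fromBlocks (G.lapMatrix ℝ + 1) (-1) (-1)
          (1 : Matrix (Fin N) (Fin N) ℝ)).mulVec v = lam2' • v)
    (hlam2min : ∀ δ : Fin N ⊕ Fin N → ℝ, (∑ k, δ k) = 0 →
        lam2' * (∑ k, δ k ^ 2) ≤ δ ⬝ᵥ (Matrix.fromBlocks (G.lapMatrix ℝ + 1) (-1) (-1)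
          (1 : Matrix (Fin N) (Fin N) ℝ)).mulVec δ) :
    ∀ i, ∀ ε > (0 : ℝ), ∀ᶠ t in atTop,
      |xhatα t i - η * ((∑ j, x t j) / (N : ℝ))| ≤ γs' / (β * lam2') + ε ∧
      |xhatβ t i - η * ((∑ j, x t j) / (N : ℝ))| ≤ γs' / (β * lam2') + ε := by
  classical
  have hNE : Nonempty (Fin N) := hG.nonempty
  have hNpos : 0 < (N : ℝ) := by exact_mod_cast Fin.pos_iff_nonempty.mpr hNE
  have hP : 0 < β * lam2' := mul_pos hβ hlam2pos
  set Lp : Matrix (Fin N ⊕ Fin N) (Fin N ⊕ Fin N) ℝ :=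
    Matrix.fromBlocks (G.lapMatrix ℝ + 1) (-1) (-1) (1 : Matrix (Fin N) (Fin N) ℝ) with hLp
  set Xh : ℝ → (Fin N ⊕ Fin N) → ℝ := fun t => Sum.elim (xhatα t) (xhatβ t) with hXh
  set D : ℝ → (Fin N ⊕ Fin N) → ℝ := fun t =>
    Sum.elim (fun i => deriv (fun s => xα s i) t) (fun i => deriv (fun s => xβ s i) t) with hD
  set m : ℝ → ℝ := fun t => (∑ k, Xh t k) / (2 * (N : ℝ)) with hm
  set V : ℝ → ℝ := fun t => ∑ k, (Xh t k - m t) ^ 2 with hV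
  -- each component of the stacked estimator satisfies the vector ODE
  have hXd : ∀ k, ∀ t : ℝ, 0 ≤ t → HasDerivAt (fun s => Xh s k)
      (D t k - β * Lp.mulVec (Xh t) k) t := by
    rintro (i | i) t ht
    · have h1 := hdynα i t ht
      have heq : (fun s => Xh s (Sum.inl i)) = fun s => xhatα s i := by
        funext s; simp [hXh]
      rw [heq]
      convert h1 using 1
      rw [hLp, Lp_apply]
      simp [hXh, hD]
      try ring
    · have h1 := hdynβ i t ht
      have heq : (fun s => Xh s (Sum.inr i)) = fun s => xhatβ s i := by
        funext s; simp [hXh]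
      rw [heq]
      convert h1 using 1
      rw [hLp, Lp_apply]
      simp [hXh, hD]
      try ring
  have hDsum : ∀ t : ℝ, ∑ k, D t k
      = (∑ i, deriv (fun s => xα s i) t) + ∑ i, deriv (fun s => xβ s i) t := by
    intro t
    rw [hD, Fintype.sum_sum_type]
    simp
  -- derivative of the sum of all components
  have hsumd : ∀ t : ℝ, 0 ≤ t →
      HasDerivAt (fun s => ∑ k, Xh s k) (∑ k, D t k) t := by
    intro t ht
    have hsum : HasDerivAt (fun s => ∑ k, Xh s k)
        (∑ k, (D t k - β * Lp.mulVec (Xh t) k)) t :=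
      HasDerivAt.fun_sum fun k _ => hXd k t ht
    have hz : ∑ k, (D t k - β * Lp.mulVec (Xh t) k) = ∑ k, D t k := by
      rw [Finset.sum_sub_distrib, ← Finset.mul_sum, hLp, Lp_sum_mulVec]
      ring
    rwa [hz] at hsum
  -- derivative of the running average m
  have hm' : ∀ t : ℝ, 0 ≤ t →
      HasDerivAt m ((∑ k, D t k) / (2 * (N : ℝ))) t := by
    intro t ht
    rw [hm]
    exact (hsumd t ht).div_const _
  -- constancy: the average of the stacked estimator tracks η x_a exactly
  have hxd : ∀ i t, HasDerivAt (fun s => x s i) (deriv (fun s => x s i) t) t := fun i t =>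
    (((hx i).differentiable one_ne_zero) t).hasDerivAt
  have hFd : ∀ t : ℝ, 0 ≤ t →
      HasDerivAt (fun s => ∑ k, Xh s k - 2 * η * ∑ j, x s j) 0 t := by
    intro t ht
    have h2 : HasDerivAt (fun s => ∑ j, x s j) (∑ j, deriv (fun s => x s j) t) t :=
      HasDerivAt.fun_sum fun j _ => hxd j t
    have h3 := (hsumd t ht).sub (h2.const_mul (2 * η))
    convert h3 using 1
    · rfl
    · rfl
    · rfl
    have h4 : (∑ i, deriv (fun s => xα s i) t) + ∑ i, deriv (fun s => xβ s i) t
        = 2 * η * ∑ j, deriv (fun s => x s j) t := by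
      rw [← Finset.sum_add_distrib, Finset.mul_sum]
      exact Finset.sum_congr rfl fun i _ => hd i t ht
    rw [hDsum, h4]
    ring
  have hmean : ∀ t : ℝ, 0 ≤ t → ∑ k, Xh t k = 2 * η * ∑ j, x t j := by
    intro t ht
    have hcont : ContinuousOn (fun s => ∑ k, Xh s k - 2 * η * ∑ j, x s j) (Set.Icc 0 t) :=
      fun s hs => ((hFd s hs.1).continuousAt).continuousWithinAt
    have hcst := constant_of_has_deriv_right_zero hcont
      (fun s hs => (hFd s hs.1).hasDerivWithinAt) t (Set.right_mem_Icc.mpr ht)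
    have hF0 : ∑ k, Xh 0 k - 2 * η * ∑ j, x 0 j = 0 := by
      rw [hXh]
      simp only [Fintype.sum_sum_type, Sum.elim_inl, Sum.elim_inr]
      have : (∑ i, xhatα 0 i) + ∑ i, xhatβ 0 i = 2 * η * ∑ j, x 0 j := by
        rw [← Finset.sum_add_distrib, Finset.mul_sum]
        exact Finset.sum_congr rfl fun i _ => by rw [hinitα, hinitβ, h0]
      linarith [this]
    have := hcst.trans hF0
    linarith [this]
  have hmeq : ∀ t : ℝ, 0 ≤ t → m t = η * ((∑ j, x t j) / (N : ℝ)) := by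
    intro t ht
    rw [hm]
    simp only
    rw [hmean t ht]
    field_simp
  -- the deviation vector has zero sum
  have hsum0 : ∀ t : ℝ, ∑ k, (Xh t k - m t) = 0 := by
    intro t
    rw [Finset.sum_sub_distrib, Finset.sum_const, Finset.card_univ]
    simp only [Fintype.card_sum, Fintype.card_fin, nsmul_eq_mul, hm]
    push_cast
    field_simp
    ring
  -- L' applied to the raw vector equals L' applied to the deviation vector
  have hLdiff : ∀ t k, Lp.mulVec (Xh t) k = Lp.mulVec (fun k' => Xh t k' - m t) k := by
    intro t k
    rw [hLp, Lp_apply, Lp_apply]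
    rcases k with i | i
    · simp only [Sum.elim_inl]
      congr 1
      · exact Finset.sum_congr rfl fun j _ => by ring
      · ring
    · simp only [Sum.elim_inr]
      ring
  set W : ℝ → ℝ := fun t => ∑ k, (Xh t k - m t) *
      ((D t k - (∑ k', D t k') / (2 * (N : ℝ)))
        - β * Lp.mulVec (fun k' => Xh t k' - m t) k) with hW
  have hVd : ∀ t : ℝ, 0 ≤ t → HasDerivAt V (2 * W t) t := by
    intro t ht
    have hterm : ∀ k, HasDerivAt (fun s => (Xh s k - m s) ^ 2)
        (2 * ((Xh t k - m t) * ((D t k - β * Lp.mulVec (Xh t) k)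
          - (∑ k', D t k') / (2 * (N : ℝ))))) t := by
      intro k
      have := ((hXd k t ht).sub (hm' t ht)).pow 2
      convert this using 1
      · rfl
      · rfl
      · rfl
      simp only [Pi.sub_apply]
      push_cast
      ring
    have hsum := HasDerivAt.fun_sum (fun k (_ : k ∈ Finset.univ) => hterm k)
    rw [hV]
    convert hsum using 1
    · rfl
    · rfl
    rw [hW, Finset.mul_sum]
    exact Finset.sum_congr rfl fun k _ => by rw [hLdiff]; ring
  have hγ0 : 0 ≤ γs' := by
    have h1 := hγ.1 (Set.mem_image_of_mem _ (Set.self_mem_Ici (a := (0:ℝ))))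
    exact le_trans (Real.sqrt_nonneg _) h1
  set c : ℝ := γs' / (β * lam2') with hc
  have hc0 : 0 ≤ c := div_nonneg hγ0 hP.le
  set K : ℝ := -(β * lam2') with hK
  set ε₀ : ℝ := γs' ^ 2 / (β * lam2') with hε₀
  have hKneg : K < 0 := by rw [hK]; exact neg_lt_zero.mpr hP
  have hKne : K ≠ 0 := hKneg.ne
  -- the differential inequality
  have hbound : ∀ t : ℝ, 0 ≤ t → 2 * W t ≤ K * V t + ε₀ := by
    intro t ht
    have hVnn : 0 ≤ V t := Finset.sum_nonneg fun k _ => sq_nonneg _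
    set s := Real.sqrt (V t) with hs
    have hs2 : s ^ 2 = V t := Real.sq_sqrt hVnn
    have hsnn : 0 ≤ s := Real.sqrt_nonneg _
    -- Cauchy-Schwarz part
    have hCS : ∑ k, (Xh t k - m t) * (D t k - (∑ k', D t k') / (2 * (N : ℝ)))
        ≤ s * γs' := by
      have h1 := Real.sum_mul_le_sqrt_mul_sqrt Finset.univ
        (fun k => Xh t k - m t) (fun k => D t k - (∑ k', D t k') / (2 * (N : ℝ)))
      have h2 : Real.sqrt (∑ k, (D t k - (∑ k', D t k') / (2 * (N : ℝ))) ^ 2) ≤ γs' := by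
        have hmem := hγ.1 (Set.mem_image_of_mem _ (ht : t ∈ Set.Ici (0:ℝ)))
        rw [eucNorm] at hmem
        have hsum_eq : ∑ k : Fin N ⊕ Fin N, (D t k - (∑ k', D t k') / (2 * (N : ℝ))) ^ 2
            = ∑ k : Fin N ⊕ Fin N,
              (Sum.elim (fun i => deriv (fun s => xα s i) t)
                  (fun i => deriv (fun s => xβ s i) t) k
                - ((∑ i, deriv (fun s => xα s i) t) + ∑ i, deriv (fun s => xβ s i) t)
                    / (2 * (N : ℝ))) ^ 2 := by
          rw [hDsum t]
        rw [hsum_eq]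
        exact hmem
      calc ∑ k, (Xh t k - m t) * (D t k - (∑ k', D t k') / (2 * (N : ℝ)))
          ≤ Real.sqrt (∑ k, (Xh t k - m t) ^ 2)
            * Real.sqrt (∑ k, (D t k - (∑ k', D t k') / (2 * (N : ℝ))) ^ 2) := h1
        _ ≤ s * γs' := by
            rw [hs, hV]
            exact mul_le_mul_of_nonneg_left h2 (Real.sqrt_nonneg _)
    -- quadratic form part
    have hquad : lam2' * V t ≤ (fun k => Xh t k - m t) ⬝ᵥ
        Lp.mulVec (fun k' => Xh t k' - m t) := by
      rw [hV, hLp]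
      exact hlam2min (fun k => Xh t k - m t) (hsum0 t)
    have hdot : (fun k => Xh t k - m t) ⬝ᵥ Lp.mulVec (fun k' => Xh t k' - m t)
        = ∑ k, (Xh t k - m t) * Lp.mulVec (fun k' => Xh t k' - m t) k := rfl
    have hWle : W t ≤ s * γs' - β * lam2' * V t := by
      have hW2 : W t = (∑ k, (Xh t k - m t) * (D t k - (∑ k', D t k') / (2 * (N : ℝ))))
          - β * ((fun k => Xh t k - m t) ⬝ᵥ Lp.mulVec (fun k' => Xh t k' - m t)) := by
        rw [hW, hdot, Finset.mul_sum, ← Finset.sum_sub_distrib]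
        exact Finset.sum_congr rfl fun k _ => by ring
      rw [hW2]
      have := mul_le_mul_of_nonneg_left hquad hβ.le
      linarith [hCS, this]
    -- Young / AM-GM step
    have hyoung : 2 * (s * γs') ≤ β * lam2' * V t + ε₀ := by
      have h4 : (2 * (s * γs') - β * lam2' * s ^ 2) * (β * lam2') ≤ γs' ^ 2 := by
        nlinarith [sq_nonneg (β * lam2' * s - γs')]
      have h5 : 2 * (s * γs') - β * lam2' * s ^ 2 ≤ γs' ^ 2 / (β * lam2') :=
        (le_div_iff₀ hP).mpr h4
      rw [hε₀, ← hs2]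
      linarith [h5]
    rw [hK]
    nlinarith [hWle, hyoung]
  -- Grönwall
  have hVle : ∀ t : ℝ, 0 ≤ t → V t ≤ gronwallBound (V 0) K ε₀ t := by
    intro t ht
    have H := le_gronwallBound_of_liminf_deriv_right_le (f := V) (f' := fun s => 2 * W s)
      (δ := V 0) (K := K) (ε := ε₀) (a := 0) (b := t)
      (fun s hs => ((hVd s hs.1).continuousAt).continuousWithinAt)
      (fun s hs r hr => ((hVd s hs.1).hasDerivWithinAt).liminf_right_slope_le hr)
      le_rfl
      (fun s hs => hbound s hs.1)
    simpa using H t ⟨ht, le_rfl⟩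
  have hPne : β * lam2' ≠ 0 := hP.ne'
  have hεK : ε₀ / K = -(c ^ 2) := by
    rw [hε₀, hK, hc, div_pow, div_neg, div_div]
    ring_nf
  -- final conclusion
  intro i ε hε
  have htend : Tendsto (fun t => Real.exp (K * t) * |V 0 - c ^ 2|) atTop (nhds 0) := by
    have h1 : Tendsto (fun t : ℝ => K * t) atTop atBot :=
      (tendsto_const_mul_atBot_of_neg hKneg).mpr tendsto_id
    have h2 := Real.tendsto_exp_atBot.comp h1
    simpa using h2.mul_const |V 0 - c ^ 2|
  filter_upwards [htend.eventually (eventually_le_nhds (by positivity : (0:ℝ) < ε ^ 2)),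
    eventually_ge_atTop (0 : ℝ)] with t hsmall ht
  have hVt0 := hVle t ht
  rw [gronwallBound_of_K_ne_0 hKne] at hVt0
  have hVt : V t ≤ V 0 * Real.exp (K * t) + ε₀ / K * (Real.exp (K * t) - 1) := hVt0
  have hVt2 : V t ≤ c ^ 2 + ε ^ 2 := by
    have hmono : Real.exp (K * t) * (V 0 - c ^ 2)
        ≤ Real.exp (K * t) * |V 0 - c ^ 2| :=
      mul_le_mul_of_nonneg_left (le_abs_self _) (Real.exp_pos _).le
    have heq : V 0 * Real.exp (K * t) + ε₀ / K * (Real.exp (K * t) - 1)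
        = c ^ 2 + Real.exp (K * t) * (V 0 - c ^ 2) := by
      rw [hεK]; ring
    rw [heq] at hVt
    linarith [hVt, hmono, hsmall]
  have hVc : V t ≤ (c + ε) ^ 2 := by nlinarith [hc0, hε.le]
  have habs : ∀ k, |Xh t k - m t| ≤ c + ε := by
    intro k
    have h1 : (Xh t k - m t) ^ 2 ≤ (c + ε) ^ 2 := by
      refine le_trans ?_ hVc
      rw [hV]
      exact Finset.single_le_sum (f := fun k => (Xh t k - m t) ^ 2)
        (fun k _ => sq_nonneg _) (Finset.mem_univ k)
    have h2 := Real.sqrt_le_sqrt h1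
    rwa [Real.sqrt_sq_eq_abs, Real.sqrt_sq (add_nonneg hc0 hε.le)] at h2
  have hmt := hmeq t ht
  constructor
  · have hk := habs (Sum.inl i)
    rw [hXh] at hk
    simp only [Sum.elim_inl] at hk
    rwa [hmt] at hk
  · have hk := habs (Sum.inr i)
    rw [hXh] at hk
    simp only [Sum.elim_inr] at hk
    rwa [hmt] at hk
end

section
/- Consider the privacy-preserving leader-following estimator dp̂_{a,i}/dt = −κ( Σ_{j=1}^N a_ij (p̂_{a,i}(t) − p̂_{a,j}(t)) + b_i (p̂_{a,i}(t) − σ p_a(t)) ), p̂_{a,i}(0) = 0, where σ > 0 is a fixed scaling constant, b_i ∈ {0,1} with b_i = 1 for at least one i, and p_a is continuously differentiable with |ṗ_a(t)| ≤ ψ/N. Then there exists γ_p > 0, independent of κ, such that for every κ > 0 and every i, limsup_{t→∞} |p̂_{a,i}(t) − σ p_a(t)| ≤ ψ γ_p / κ; i.e., each local estimate converges exponentially to a neighborhood of the scaled average desired power σ p_a(t), with the bound shrinking as κ grows. -/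
open Filter Matrix


lemma eventually_le_of_deriv (f f' : ℝ → ℝ)
    (hf : ∀ t : ℝ, 0 ≤ t → HasDerivAt f (f' t) t)
    (K δ : ℝ) (hδ : 0 < δ)
    (hd : ∀ t : ℝ, 0 ≤ t → K ≤ f t → f' t ≤ -δ) :
    ∀ᶠ t in atTop, f t ≤ K := by
  have hcont : ContinuousOn f (Set.Ici 0) := fun t ht =>
    ((hf t ht).continuousAt).continuousWithinAt
  -- step 1: some T ≥ 0 with f T ≤ K
  have hT : ∃ T : ℝ, 0 ≤ T ∧ f T ≤ K := by
    by_contra h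
    push_neg at h
    have hder : ∀ t ∈ interior (Set.Ici (0:ℝ)), deriv (fun s => f s + δ * s) t ≤ 0 := by
      intro t ht
      rw [interior_Ici] at ht
      have h1 : HasDerivAt (fun s => f s + δ * s) (f' t + δ) t :=
        (hf t (le_of_lt ht)).add (by simpa using (hasDerivAt_id t).const_mul δ : HasDerivAt (fun s => δ * s) δ t)
      rw [h1.deriv]
      have := hd t (le_of_lt ht) (le_of_lt (h t (le_of_lt ht)))
      linarith
    have hdiff : DifferentiableOn ℝ (fun s => f s + δ * s) (interior (Set.Ici (0:ℝ))) := by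
      intro t ht
      rw [interior_Ici] at ht
      exact (((hf t (le_of_lt ht)).add (by simpa using (hasDerivAt_id t).const_mul δ : HasDerivAt (fun s => δ * s) δ t)).differentiableAt).differentiableWithinAt
    have hanti : AntitoneOn (fun s => f s + δ * s) (Set.Ici 0) :=
      antitoneOn_of_deriv_nonpos (convex_Ici 0)
        (by exact hcont.add (Continuous.continuousOn (by continuity))) hdiff hder
    set T := max 0 ((f 0 - K) / δ + 1) with hTdef
    have hT0 : (0:ℝ) ≤ T := le_max_left _ _
    have h2 : f T + δ * T ≤ f 0 + δ * 0 := hanti Set.self_mem_Ici hT0 hT0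
    have h3 : (f 0 - K) / δ + 1 ≤ T := le_max_right _ _
    have h4 : f 0 - K + δ ≤ δ * T := by
      have := mul_le_mul_of_nonneg_left h3 (le_of_lt hδ)
      calc f 0 - K + δ = δ * ((f 0 - K)/δ + 1) := by field_simp
        _ ≤ δ * T := this
    have := h T hT0
    linarith
  obtain ⟨T, hT0, hTK⟩ := hT
  rw [eventually_atTop]
  refine ⟨T, fun t htT => ?_⟩
  by_contra hK
  push_neg at hK
  have htT' : T < t := lt_of_le_of_ne htT (by rintro rfl; linarith)
  set S := Set.Icc T t ∩ f ⁻¹' Set.Iic K with hS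
  have hScl : IsClosed S :=
    (hcont.mono (Set.Icc_subset_Ici_self.trans (fun x hx => le_trans hT0 hx))).preimage_isClosed_of_isClosed isClosed_Icc isClosed_Iic
  have hScomp : IsCompact S := isCompact_Icc.of_isClosed_subset hScl Set.inter_subset_left
  have hSne : S.Nonempty := ⟨T, ⟨le_refl T, le_of_lt htT'⟩, hTK⟩
  have hs0mem : sSup S ∈ S := hScomp.sSup_mem hSne
  obtain ⟨⟨hs0T, hs0t⟩, hs0K⟩ := hs0mem
  have hs0K' : f (sSup S) ≤ K := hs0K
  have hs0lt : (sSup S) < t := lt_of_le_of_ne hs0t (by intro h; rw [h] at hs0K'; linarith)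
  have habove : ∀ s, (sSup S) < s → s ≤ t → K < f s := by
    intro s hs1 hs2
    by_contra h
    push_neg at h
    have : s ∈ S := ⟨⟨le_trans hs0T (le_of_lt hs1), hs2⟩, h⟩
    exact absurd (le_csSup (hScomp.bddAbove) this) (not_le.2 hs1)
  have hs00 : (0:ℝ) ≤ (sSup S) := le_trans hT0 hs0T
  have hanti : AntitoneOn f (Set.Icc (sSup S) t) := by
    apply antitoneOn_of_deriv_nonpos (convex_Icc (sSup S) t)
      (hcont.mono (fun x hx => le_trans hs00 hx.1))
    · intro x hx
      rw [interior_Icc] at hx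
      exact ((hf x (le_trans hs00 (le_of_lt hx.1))).differentiableAt).differentiableWithinAt
    · intro x hx
      rw [interior_Icc] at hx
      have hx0 : (0:ℝ) ≤ x := le_trans hs00 (le_of_lt hx.1)
      rw [(hf x hx0).deriv]
      have := hd x hx0 (le_of_lt (habove x hx.1 (le_of_lt hx.2)))
      linarith
  have := hanti (Set.left_mem_Icc.2 (le_of_lt hs0lt)) (Set.right_mem_Icc.2 (le_of_lt hs0lt)) (le_of_lt hs0lt)
  linarith



lemma coercive (N : ℕ) (G : SimpleGraph (Fin N)) [DecidableRel G.Adj] (hG : G.Connected)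
    (b : Fin N → ℝ) (hb : ∀ i, b i = 0 ∨ b i = 1) (hb1 : ∃ i, b i = 1) :
    ∃ lam > (0:ℝ), ∀ x : Fin N → ℝ,
      lam * ∑ i, (x i)^2 ≤ ∑ i, x i * ((∑ j, (G.adjMatrix ℝ) i j * (x i - x j)) + b i * x i) := by
  obtain ⟨i0, hi0⟩ := hb1
  set Q : (Fin N → ℝ) → ℝ :=
    fun x => ∑ i, x i * ((∑ j, (G.adjMatrix ℝ) i j * (x i - x j)) + b i * x i) with hQdef
  -- symmetric form
  have hQsym : ∀ x : Fin N → ℝ, 2 * Q x =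
      (∑ i, ∑ j, (G.adjMatrix ℝ) i j * (x i - x j)^2) + 2 * ∑ i, b i * (x i)^2 := by
    intro x
    have hsplit : Q x = (∑ i, ∑ j, (G.adjMatrix ℝ) i j * (x i * (x i - x j)))
        + ∑ i, b i * (x i)^2 := by
      rw [hQdef]
      rw [← Finset.sum_add_distrib]
      apply Finset.sum_congr rfl
      intro i _
      rw [mul_add, Finset.mul_sum]
      congr 1
      · exact Finset.sum_congr rfl fun j _ => by ring
      · ring
    have hswap : (∑ i, ∑ j, (G.adjMatrix ℝ) i j * (x i * (x i - x j)))
        = ∑ i, ∑ j, (G.adjMatrix ℝ) i j * (x j * (x j - x i)) := by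
      rw [Finset.sum_comm]
      apply Finset.sum_congr rfl; intro i _
      apply Finset.sum_congr rfl; intro j _
      rw [SimpleGraph.adjMatrix_apply, SimpleGraph.adjMatrix_apply]
      by_cases h : G.Adj i j
      · simp [h, h.symm]
      · have h2 : ¬ G.Adj j i := fun h' => h (h'.symm)
        simp [h, h2]
    have hcomb : (∑ i, ∑ j, (G.adjMatrix ℝ) i j * (x i * (x i - x j)))
        + (∑ i, ∑ j, (G.adjMatrix ℝ) i j * (x j * (x j - x i)))
        = ∑ i, ∑ j, (G.adjMatrix ℝ) i j * (x i - x j)^2 := by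
      rw [← Finset.sum_add_distrib]
      apply Finset.sum_congr rfl; intro i _
      rw [← Finset.sum_add_distrib]
      apply Finset.sum_congr rfl; intro j _
      ring
    rw [hsplit]; rw [← hcomb]; rw [hswap]; ring
  -- nonnegativity pieces
  have hbnn : ∀ i, (0:ℝ) ≤ b i := fun i => by rcases hb i with h | h <;> simp [h]
  have hQnn : ∀ x : Fin N → ℝ, 0 ≤ Q x := by
    intro x
    have h1 : (0:ℝ) ≤ ∑ i, ∑ j, (G.adjMatrix ℝ) i j * (x i - x j)^2 :=
      Finset.sum_nonneg fun i _ => Finset.sum_nonneg fun j _ =>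
        mul_nonneg (by simp [SimpleGraph.adjMatrix_apply]; positivity) (sq_nonneg _)
    have h2 : (0:ℝ) ≤ ∑ i, b i * (x i)^2 :=
      Finset.sum_nonneg fun i _ => mul_nonneg (hbnn i) (sq_nonneg _)
    nlinarith [hQsym x]
  -- Q x = 0 → x = 0
  have hQzero : ∀ x : Fin N → ℝ, Q x = 0 → x = 0 := by
    intro x hx
    have h1 : (0:ℝ) ≤ ∑ i, ∑ j, (G.adjMatrix ℝ) i j * (x i - x j)^2 :=
      Finset.sum_nonneg fun i _ => Finset.sum_nonneg fun j _ =>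
        mul_nonneg (by simp [SimpleGraph.adjMatrix_apply]; positivity) (sq_nonneg _)
    have h2 : (0:ℝ) ≤ ∑ i, b i * (x i)^2 :=
      Finset.sum_nonneg fun i _ => mul_nonneg (hbnn i) (sq_nonneg _)
    have hsym := hQsym x
    rw [hx] at hsym
    have h1' : (∑ i, ∑ j, (G.adjMatrix ℝ) i j * (x i - x j)^2) = 0 := by linarith
    have h2' : (∑ i, b i * (x i)^2) = 0 := by linarith
    -- edges force equality
    have hedge : ∀ i j : Fin N, G.Adj i j → x i = x j := by
      intro i j hij
      have hterm : ∀ i ∈ (Finset.univ : Finset (Fin N)),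
          (∑ j, (G.adjMatrix ℝ) i j * (x i - x j)^2) = 0 := by
        rw [← Finset.sum_eq_zero_iff_of_nonneg]
        · exact h1'
        · exact fun i _ => Finset.sum_nonneg fun j _ =>
            mul_nonneg (by simp [SimpleGraph.adjMatrix_apply]; positivity) (sq_nonneg _)
      have hterm2 : ∀ j' ∈ (Finset.univ : Finset (Fin N)),
          (G.adjMatrix ℝ) i j' * (x i - x j')^2 = 0 := by
        rw [← Finset.sum_eq_zero_iff_of_nonneg]
        · exact hterm i (Finset.mem_univ i)
        · exact fun j _ => mul_nonneg (by simp [SimpleGraph.adjMatrix_apply]; positivity) (sq_nonneg _)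
      have := hterm2 j (Finset.mem_univ j)
      rw [SimpleGraph.adjMatrix_apply, if_pos hij, one_mul] at this
      have := sq_eq_zero_iff.mp this
      linarith
    -- connectivity forces constancy
    have hconst : ∀ i j : Fin N, x i = x j := by
      intro i j
      obtain ⟨w⟩ := hG.preconnected i j
      induction w with
      | nil => rfl
      | cons h p ih => rw [hedge _ _ h]; exact ih
    -- leader forces zero
    have hterm3 : ∀ i ∈ (Finset.univ : Finset (Fin N)), b i * (x i)^2 = 0 := by
      rw [← Finset.sum_eq_zero_iff_of_nonneg]
      · exact h2'
      · exact fun i _ => mul_nonneg (hbnn i) (sq_nonneg _)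
    have hx0 : x i0 = 0 := by
      have := hterm3 i0 (Finset.mem_univ i0)
      rw [hi0, one_mul] at this
      exact sq_eq_zero_iff.mp this
    funext j
    rw [hconst j i0, hx0]; rfl
  -- scaling
  have hQsc : ∀ (c : ℝ) (x : Fin N → ℝ), Q (fun i => c * x i) = c^2 * Q x := by
    intro c x
    rw [hQdef]
    simp only
    rw [Finset.mul_sum]
    apply Finset.sum_congr rfl; intro i _
    have : (∑ j, (G.adjMatrix ℝ) i j * (c * x i - c * x j))
        = c * ∑ j, (G.adjMatrix ℝ) i j * (x i - x j) := by
      rw [Finset.mul_sum]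
      exact Finset.sum_congr rfl fun j _ => by ring
    rw [this]; ring
  -- compactness
  set S : Set (Fin N → ℝ) := {x | ∑ i, (x i)^2 = 1} with hSdef
  have hn : Continuous (fun x : Fin N → ℝ => ∑ i, (x i)^2) :=
    continuous_finset_sum _ fun i _ => (continuous_apply i).pow 2
  have hQcont : Continuous Q := by
    rw [hQdef]
    exact continuous_finset_sum _ fun i _ => (continuous_apply i).mul
      ((continuous_finset_sum _ fun j _ =>
        continuous_const.mul ((continuous_apply i).sub (continuous_apply j))).add
        (continuous_const.mul (continuous_apply i)))
  have hScl : IsClosed S := isClosed_eq hn continuous_const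
  have hSsub : S ⊆ Metric.closedBall 0 1 := by
    intro x hx
    rw [Metric.mem_closedBall, dist_zero_right]
    rw [pi_norm_le_iff_of_nonneg (by norm_num)]
    intro i
    have h1 : (x i)^2 ≤ ∑ j, (x j)^2 :=
      Finset.single_le_sum (fun j _ => sq_nonneg (x j)) (Finset.mem_univ i)
    rw [hx] at h1
    rw [Real.norm_eq_abs, ← Real.sqrt_one, ← Real.sqrt_sq_eq_abs]
    exact Real.sqrt_le_sqrt h1
  have hScomp : IsCompact S :=
    (isCompact_closedBall (0 : Fin N → ℝ) 1).of_isClosed_subset hScl hSsub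
  have hSne : S.Nonempty := by
    refine ⟨fun j => if j = i0 then 1 else 0, ?_⟩
    rw [hSdef]
    simp only [Set.mem_setOf_eq]
    rw [Finset.sum_eq_single i0]
    · simp
    · intro j _ hj; simp [hj]
    · intro h; exact absurd (Finset.mem_univ i0) h
  obtain ⟨x₀, hx₀S, hmin⟩ := hScomp.exists_isMinOn hSne hQcont.continuousOn
  refine ⟨Q x₀, ?_, ?_⟩
  · rcases lt_or_eq_of_le (hQnn x₀) with h | h
    · exact h
    · exfalso
      have := hQzero x₀ h.symm
      rw [this] at hx₀S
      simp [hSdef] at hx₀S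
  · intro x
    by_cases hx : ∑ i, (x i)^2 = 0
    · have hxz : x = 0 := by
        funext i
        have := (Finset.sum_eq_zero_iff_of_nonneg (fun j _ => sq_nonneg (x j))).mp hx i (Finset.mem_univ i)
        exact sq_eq_zero_iff.mp this
      rw [hxz]
      simp
    · have hxpos : 0 < ∑ i, (x i)^2 :=
        lt_of_le_of_ne (Finset.sum_nonneg fun i _ => sq_nonneg _) (Ne.symm hx)
      set s := Real.sqrt (∑ i, (x i)^2) with hsdef
      have hs : 0 < s := Real.sqrt_pos.2 hxpos
      have hs2 : s^2 = ∑ i, (x i)^2 := Real.sq_sqrt (le_of_lt hxpos)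
      have hyS : (fun i => s⁻¹ * x i) ∈ S := by
        rw [hSdef]
        simp only [Set.mem_setOf_eq, mul_pow]
        rw [← Finset.mul_sum, ← hs2]
        field_simp
      have hmin' : Q x₀ ≤ Q (fun i => s⁻¹ * x i) := hmin hyS
      have := hQsc s⁻¹ x
      rw [this] at hmin'
      have h3 : (s⁻¹)^2 = (∑ i, (x i)^2)⁻¹ := by
        rw [← hs2]; rw [inv_pow]
      rw [h3] at hmin'
      calc Q x₀ * ∑ i, (x i)^2 ≤ ((∑ i, (x i)^2)⁻¹ * Q x) * ∑ i, (x i)^2 := by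
            apply mul_le_mul_of_nonneg_right hmin' (le_of_lt hxpos)
        _ = Q x := by field_simp



/-- the privacy-preserving leader-following estimator
`dp̂ₐᵢ/dt = −κ(Σⱼ aᵢⱼ (p̂ₐᵢ − p̂ₐⱼ) + bᵢ(p̂ₐᵢ − σ pₐ))`, `p̂ₐᵢ(0) = 0`, with privacy scaling
`σ > 0`: there exists `γₚ > 0`, independent of `κ`, such that for every `κ > 0` and every `i`,
`limsup_{t→∞} |p̂ₐᵢ(t) − σ pₐ(t)| ≤ ψ γₚ / κ`. -/
theorem statement10
    (N : ℕ) (G : SimpleGraph (Fin N)) [DecidableRel G.Adj] (hG : G.Connected)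
    (b : Fin N → ℝ) (hb : ∀ i, b i = 0 ∨ b i = 1) (hb1 : ∃ i, b i = 1)
    (σ : ℝ) (hσ : 0 < σ)
    (pa : ℝ → ℝ) (hpa : ContDiff ℝ 1 pa)
    (ψ : ℝ) (hψ : 0 < ψ)
    (hpa' : ∀ t : ℝ, 0 ≤ t → |deriv pa t| ≤ ψ / (N : ℝ)) :
    ∃ γp > (0 : ℝ), ∀ κ > (0 : ℝ), ∀ phat : ℝ → Fin N → ℝ,
      -- the scaled leader-following estimator dynamics
      (∀ i, ∀ t : ℝ, 0 ≤ t → HasDerivAt (fun s => phat s i)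
        (-κ * ((∑ j, (G.adjMatrix ℝ) i j * (phat t i - phat t j))
          + b i * (phat t i - σ * pa t))) t) →
      (∀ i, phat 0 i = 0) →
      -- limsup_{t→∞} |p̂ₐᵢ(t) − σ pₐ(t)| ≤ ψ γₚ / κ
      ∀ i, ∀ ε > (0 : ℝ), ∀ᶠ t in atTop, |phat t i - σ * pa t| ≤ ψ * γp / κ + ε := by
  
  obtain ⟨lam, hlam, hQ⟩ := coercive N G hG b hb hb1
  have hNpos : 0 < N := by
    rcases hb1 with ⟨i, _⟩
    exact i.pos
  have hN : (0:ℝ) < N := by exact_mod_cast hNpos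
  have hsN : 0 < Real.sqrt N := Real.sqrt_pos.2 hN
  refine ⟨σ * Real.sqrt N / ((N : ℝ) * lam),
    div_pos (mul_pos hσ hsN) (mul_pos hN hlam), ?_⟩
  intro κ hκ phat hdyn hinit i ε hε
  have hpaD : ∀ t : ℝ, HasDerivAt pa (deriv pa t) t :=
    fun t => (hpa.differentiable one_ne_zero t).hasDerivAt
  set V : ℝ → ℝ := fun t => ∑ k, (phat t k - σ * pa t)^2 with hVdef
  set V' : ℝ → ℝ := fun t => ∑ k, 2 * (phat t k - σ * pa t) *
      (-κ * ((∑ j, (G.adjMatrix ℝ) k j * (phat t k - phat t j))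
        + b k * (phat t k - σ * pa t)) - σ * deriv pa t) with hV'def
  have hVnn : ∀ t, 0 ≤ V t := fun t => Finset.sum_nonneg fun k _ => sq_nonneg _
  have hV : ∀ t : ℝ, 0 ≤ t → HasDerivAt V (V' t) t := by
    intro t ht
    apply HasDerivAt.fun_sum
    intro k _
    have h1 : HasDerivAt (fun s => phat s k - σ * pa s)
        (-κ * ((∑ j, (G.adjMatrix ℝ) k j * (phat t k - phat t j))
          + b k * (phat t k - σ * pa t)) - σ * deriv pa t) t :=
      (hdyn k t ht).sub ((hpaD t).const_mul σ)
    have h2 := h1.pow 2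
    convert h2 using 1
    · rfl
    · rfl
    simp [pow_one]
  set a : ℝ := 2 * κ * lam with hadef
  set c : ℝ := 2 * σ * (ψ / (N:ℝ)) * Real.sqrt N with hcdef
  set R : ℝ := ψ * (σ * Real.sqrt N / ((N : ℝ) * lam)) / κ with hRdef
  have ha : 0 < a := by positivity
  have hR : 0 < R := by positivity
  have hcR : c = a * R := by
    rw [hcdef, hadef, hRdef]
    field_simp
  have hVle : ∀ t : ℝ, 0 ≤ t → V' t ≤ -a * V t + c * Real.sqrt (V t) := by
    intro t ht
    set x : Fin N → ℝ := fun k => phat t k - σ * pa t with hxdef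
    have hVx : V t = ∑ k, (x k)^2 := rfl
    have he : V' t = -(2*κ) * (∑ k, x k * ((∑ j, (G.adjMatrix ℝ) k j * (x k - x j)) + b k * x k))
        - 2 * σ * deriv pa t * ∑ k, x k := by
      rw [hV'def]
      simp only
      rw [Finset.mul_sum, Finset.mul_sum, ← Finset.sum_sub_distrib]
      apply Finset.sum_congr rfl
      intro k _
      have h3 : (∑ j, (G.adjMatrix ℝ) k j * (phat t k - phat t j))
          = ∑ j, (G.adjMatrix ℝ) k j * (x k - x j) :=
        Finset.sum_congr rfl fun j _ => by rw [hxdef]; ring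
      rw [h3]
      rw [hxdef]
      ring
    have hQx := hQ x
    have hCS : |∑ k, x k| ≤ Real.sqrt N * Real.sqrt (V t) := by
      have h4 : (∑ k, x k)^2 ≤ (N : ℝ) * V t := by
        have := sq_sum_le_card_mul_sum_sq (s := (Finset.univ : Finset (Fin N))) (f := x)
        simpa [hVx] using this
      calc |∑ k, x k| = Real.sqrt ((∑ k, x k)^2) := (Real.sqrt_sq_eq_abs _).symm
        _ ≤ Real.sqrt ((N : ℝ) * V t) := Real.sqrt_le_sqrt h4
        _ = Real.sqrt N * Real.sqrt (V t) := Real.sqrt_mul (le_of_lt hN) _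
    have hpt := hpa' t ht
    have h5 : -(2 * σ * deriv pa t * ∑ k, x k) ≤ c * Real.sqrt (V t) := by
      calc -(2 * σ * deriv pa t * ∑ k, x k) ≤ |2 * σ * deriv pa t * ∑ k, x k| := neg_le_abs _
        _ = 2 * σ * |deriv pa t| * |∑ k, x k| := by
            rw [abs_mul, abs_mul, abs_mul]
            rw [abs_of_pos hσ, abs_of_nonneg (by norm_num : (0:ℝ) ≤ 2)]
        _ ≤ 2 * σ * (ψ / (N:ℝ)) * (Real.sqrt N * Real.sqrt (V t)) := by
            apply mul_le_mul
            · exact mul_le_mul_of_nonneg_left hpt (by positivity)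
            · exact hCS
            · exact abs_nonneg _
            · positivity
        _ = c * Real.sqrt (V t) := by rw [hcdef]; ring
    have h6 : -(2*κ) * (∑ k, x k * ((∑ j, (G.adjMatrix ℝ) k j * (x k - x j)) + b k * x k))
        ≤ -a * V t := by
      rw [hadef, hVx]
      nlinarith [hQx]
    rw [he]
    linarith
  -- apply comparison lemma
  have hcomp := eventually_le_of_deriv V V' hV ((R + ε)^2) (a * ε * (R + ε)) (by positivity) ?_
  · refine hcomp.mono fun t hVt => ?_
    have h7 : (phat t i - σ * pa t)^2 ≤ (R + ε)^2 :=
      le_trans (Finset.single_le_sum (fun k _ => sq_nonneg (phat t k - σ * pa t))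
        (Finset.mem_univ i)) hVt
    have h8 : |phat t i - σ * pa t| ≤ R + ε := by
      calc |phat t i - σ * pa t| = Real.sqrt ((phat t i - σ * pa t)^2) :=
            (Real.sqrt_sq_eq_abs _).symm
        _ ≤ Real.sqrt ((R + ε)^2) := Real.sqrt_le_sqrt h7
        _ = R + ε := Real.sqrt_sq (by positivity)
    exact h8
  · intro t ht hK
    have hVt := hVle t ht
    set u := Real.sqrt (V t) with hudef
    have hu2 : u^2 = V t := Real.sq_sqrt (hVnn t)
    have huge : R + ε ≤ u := by
      rw [hudef]
      calc R + ε = Real.sqrt ((R + ε)^2) := (Real.sqrt_sq (by positivity)).symm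
        _ ≤ Real.sqrt (V t) := Real.sqrt_le_sqrt hK
    have hkey : 0 ≤ a * (u - (R + ε)) * (u + ε) := by
      apply mul_nonneg (mul_nonneg ha.le (sub_nonneg.2 huge))
      have : 0 ≤ u := Real.sqrt_nonneg _
      linarith
    rw [hcR] at hVt
    nlinarith [hVt, hu2, hkey]
end
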